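/- arXiv:1411.4592 — 5 statements merged into one kernel-verified Lean document; each statement's English description precedes it below -/
import Mathlib

section
/- Let n ≥ 2, let u = (u₁,…,u_{n+1}) ∈ ℝ^{n+1} with u₁ ≠ 0 and u_{n+1} ≠ 0, let A be an invertible n×n real matrix, and let s ≥ t be integers with r = s − t > 0. Let M be the n×(n+r) real matrix whose first n columns form the matrix A·C_r(u^J)^t and whose (n+i)-th column, for each 1 ≤ i ≤ r, equals the last column of A·C_r(u^J)^{t+i}. Then M has rank n, and the vectors e₁^J,…,e_r^J form a basis of the kernel of M, where e_i^J ∈ ℝ^{n+r} is the vector with (e_i^J)_{(r−i)+m} = u_{n+2−m} for 1 ≤ m ≤ n+1 and all other entries zero (so e_i^J carries the reversed block (u_{n+1},…,u₁) preceded by r−i zeros and followed by i−1 zeros). -/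
open Matrix Polynomial

noncomputable section

/-- Top companion matrix of `u`. -/
def Ct (n : ℕ) (u : Fin (n + 1) → ℝ) : Matrix (Fin n) (Fin n) ℝ :=
  Matrix.of fun i j =>
    if i.val = 0 then -u ⟨n - 1 - j.val, by omega⟩ / u (Fin.last n)
    else if j.val + 1 = i.val then 1 else 0

/-- Bottom companion matrix of `u`. -/
def Cb (n : ℕ) (u : Fin (n + 1) → ℝ) : Matrix (Fin n) (Fin n) ℝ :=
  Matrix.of fun i j =>
    if i.val = n - 1 then -u ⟨n - j.val, by omega⟩ / u 0
    else if j.val = i.val + 1 then 1 else 0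

/-- Left companion matrix of `u`. -/
def Cl (n : ℕ) (u : Fin (n + 1) → ℝ) : Matrix (Fin n) (Fin n) ℝ :=
  Matrix.of fun i j =>
    if j.val = 0 then -u ⟨i.val + 1, by have := i.isLt; omega⟩ / u 0
    else if i.val + 1 = j.val then 1 else 0

/-- Right companion matrix of `u`. -/
def Cr (n : ℕ) (u : Fin (n + 1) → ℝ) : Matrix (Fin n) (Fin n) ℝ :=
  Matrix.of fun i j =>
    if j.val = n - 1 then -u ⟨i.val, by have := i.isLt; omega⟩ / u (Fin.last n)
    else if i.val = j.val + 1 then 1 else 0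

/-- A square matrix is Toeplitz if entries depend only on the difference of indices. -/
def IsToeplitz {n : ℕ} (T : Matrix (Fin n) (Fin n) ℝ) : Prop :=
  ∀ (i j : Fin n) (hi : i.val + 1 < n) (hj : j.val + 1 < n),
    T ⟨i.val + 1, hi⟩ ⟨j.val + 1, hj⟩ = T i j

/-- A square matrix is Hankel if entries depend only on the sum of indices. -/
def IsHankel {n : ℕ} (H : Matrix (Fin n) (Fin n) ℝ) : Prop :=
  ∀ (i j : Fin n) (hi : i.val + 1 < n) (hj : j.val + 1 < n),
    H ⟨i.val + 1, hi⟩ j = H i ⟨j.val + 1, hj⟩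

/-- `∂T` for a Toeplitz matrix `T`: the (n-1)×(n+1) matrix with entries `a_{i+1-j}`
(1-based), expressed via the entries of `T`. -/
def dT {n : ℕ} (T : Matrix (Fin n) (Fin n) ℝ) : Matrix (Fin (n - 1)) (Fin (n + 1)) ℝ :=
  Matrix.of fun i j =>
    if j.val = 0 then
      T ⟨i.val + 1, by have := i.isLt; omega⟩ ⟨0, by have := i.isLt; omega⟩
    else
      T ⟨i.val, by have := i.isLt; omega⟩ ⟨j.val - 1, by have := i.isLt; have := j.isLt; omega⟩

/-- `∂H` for a Hankel matrix `H`: the (n-1)×(n+1) matrix with entries `a_{i+j-n-1}`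
(1-based), expressed via the entries of `H`. -/
def dH {n : ℕ} (H : Matrix (Fin n) (Fin n) ℝ) : Matrix (Fin (n - 1)) (Fin (n + 1)) ℝ :=
  Matrix.of fun i j =>
    if h : j.val < n then H ⟨i.val, by have := i.isLt; omega⟩ ⟨j.val, h⟩
    else H ⟨i.val + 1, by have := i.isLt; omega⟩ ⟨n - 1, by have := i.isLt; omega⟩

/-- The reversed vector `u^J`. -/
def revVec {m : ℕ} (u : Fin m → ℝ) : Fin m → ℝ := fun i => u i.rev

/-- The lower triangular Toeplitz matrix `U₊(u)` with first column `(u₁,…,u_n)ᵀ`. -/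
def Uplus (n : ℕ) (u : Fin (n + 1) → ℝ) : Matrix (Fin n) (Fin n) ℝ :=
  Matrix.of fun i j =>
    if j.val ≤ i.val then u ⟨i.val - j.val, by have := i.isLt; omega⟩ else 0

/-- The upper triangular Toeplitz matrix `U₋(u)` with first row `(u_{n+1},…,u₂)`. -/
def Uminus (n : ℕ) (u : Fin (n + 1) → ℝ) : Matrix (Fin n) (Fin n) ℝ :=
  Matrix.of fun i j =>
    if h : i.val ≤ j.val then u ⟨n + i.val - j.val, by have := j.isLt; omega⟩ else 0

/-- The flip (exchange) matrix `J`. -/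
def Jmat (n : ℕ) : Matrix (Fin n) (Fin n) ℝ :=
  Matrix.of fun i j => if j = i.rev then 1 else 0

/-- The Toeplitz Bezoutian `B_T(u,v) = U₊(u)U₋(v) − U₊(v)U₋(u)`. -/
def BT (n : ℕ) (u v : Fin (n + 1) → ℝ) : Matrix (Fin n) (Fin n) ℝ :=
  Uplus n u * Uminus n v - Uplus n v * Uminus n u

/-- The Hankel Bezoutian `B_H(u,v) = U₊(v)JU₋(u) − U₊(u)JU₋(v)`. -/
def BH (n : ℕ) (u v : Fin (n + 1) → ℝ) : Matrix (Fin n) (Fin n) ℝ :=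
  Uplus n v * Jmat n * Uminus n u - Uplus n u * Jmat n * Uminus n v

/-- The polynomial `u(λ) = u₁ + u₂λ + ⋯ + u_{n+1}λⁿ` associated to a vector. -/
def polyOf {m : ℕ} (u : Fin m → ℝ) : Polynomial ℝ :=
  ∑ i : Fin m, Polynomial.C (u i) * Polynomial.X ^ (i : ℕ)

lemma Cr_apply {n : ℕ} (v : Fin (n + 1) → ℝ) (i j : Fin n) :
    Cr n v i j = if j.val = n - 1 then -v ⟨i.val, by have := i.isLt; omega⟩ / v (Fin.last n)
      else if i.val = j.val + 1 then 1 else 0 := rfl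

lemma Cr_pow_apply {n : ℕ} (v : Fin (n + 1) → ℝ) (k : ℕ) :
    ∀ (j p : Fin n), j.val + k < n →
    (Cr n v ^ k) p j = if p.val = j.val + k then 1 else 0 := by
  induction k with
  | zero =>
    intro j p _
    simp [Matrix.one_apply, Fin.ext_iff, eq_comm]
  | succ k ih =>
    intro j p h
    rw [pow_succ', Matrix.mul_apply]
    rw [Finset.sum_eq_single (⟨j.val + k, by omega⟩ : Fin n)]
    · rw [ih j ⟨j.val + k, by omega⟩ (by omega)]
      rw [if_pos rfl, mul_one, Cr_apply]
      rw [if_neg (by simp; omega)]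
      simp [Fin.ext_iff, add_assoc]
    · intro b _ hb
      rw [ih j b (by omega), if_neg (by simpa [Fin.ext_iff] using hb), mul_zero]
    · intro hb; exact absurd (Finset.mem_univ _) hb

lemma Cr_pow_n {n : ℕ} (v : Fin (n + 1) → ℝ) (hn : 0 < n) (p : Fin n) :
    (Cr n v ^ n) p ⟨0, hn⟩ =
      -v ⟨p.val, by have := p.isLt; omega⟩ / v (Fin.last n) := by
  have hsplit : Cr n v ^ n = Cr n v * Cr n v ^ (n - 1) := by
    rw [← pow_succ']; congr 1; omega
  rw [hsplit, Matrix.mul_apply]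
  rw [Finset.sum_eq_single (⟨n - 1, by omega⟩ : Fin n)]
  · rw [Cr_pow_apply v (n-1) ⟨0, hn⟩ ⟨n - 1, by omega⟩ (by simp only [Fin.val_mk]; omega)]
    rw [if_pos (by simp), mul_one, Cr_apply, if_pos rfl]
  · intro b _ hb
    rw [Cr_pow_apply v (n-1) ⟨0, hn⟩ b (by simp only [Fin.val_mk]; omega),
      if_neg (by simpa [Fin.ext_iff] using hb), mul_zero]
  · intro hb; exact absurd (Finset.mem_univ _) hb

lemma Cr_sum {n : ℕ} (v : Fin (n + 1) → ℝ) (hn : 0 < n)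
    (hvl : v (Fin.last n) ≠ 0) (p : Fin n) :
    ∑ m : Fin (n + 1), v m * (Cr n v ^ (m : ℕ)) p ⟨0, hn⟩ = 0 := by
  rw [Fin.sum_univ_castSucc]
  have h1 : ∑ m : Fin n, v m.castSucc * (Cr n v ^ ((m.castSucc : Fin (n+1)) : ℕ)) p ⟨0, hn⟩
      = v p.castSucc := by
    rw [Finset.sum_eq_single p]
    · rw [Fin.coe_castSucc, Cr_pow_apply v p.val ⟨0, hn⟩ p (by simp only [Fin.val_mk]; omega), if_pos (by simp), mul_one]
    · intro b _ hb
      rw [Fin.coe_castSucc, Cr_pow_apply v b.val ⟨0, hn⟩ p (by simp only [Fin.val_mk]; omega),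
        if_neg (by simp [Fin.ext_iff] at hb ⊢; omega), mul_zero]
    · intro hb; exact absurd (Finset.mem_univ _) hb
  rw [h1, Fin.val_last, Cr_pow_n v hn p]
  have : v p.castSucc = v ⟨p.val, by have := p.isLt; omega⟩ := by
    congr 1
  rw [this]
  have hpl : v ⟨p.val, by have := p.isLt; omega⟩ ≠ 0 ∨ True := Or.inr trivial
  field_simp
  ring

lemma Cr_det_isUnit {n : ℕ} (v : Fin (n + 1) → ℝ) (hn : 0 < n)
    (hv0 : v 0 ≠ 0) (hvl : v (Fin.last n) ≠ 0) : IsUnit (Cr n v).det := by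
  rw [isUnit_iff_ne_zero]
  intro hdet
  obtain ⟨x, hx, hx0⟩ := (Matrix.exists_mulVec_eq_zero_iff).mpr hdet
  apply hx
  have hlast : x ⟨n - 1, by omega⟩ = 0 := by
    have h0 := congrFun hx0 ⟨0, hn⟩
    rw [Matrix.mulVec, dotProduct] at h0
    rw [Finset.sum_eq_single (⟨n - 1, by omega⟩ : Fin n)] at h0
    · rw [Cr_apply, if_pos rfl] at h0
      simp only [Pi.zero_apply] at h0
      have hv0' : v ⟨0, by omega⟩ ≠ 0 := hv0
      rcases mul_eq_zero.mp h0 with h | h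
      · exfalso
        rcases div_eq_zero_iff.mp h with h' | h'
        · exact hv0' (by simpa [neg_eq_zero] using h')
        · exact hvl h'
      · exact h
    · intro b _ hb
      rw [Cr_apply, if_neg (by simp [Fin.ext_iff] at hb ⊢; omega), if_neg (by simp), zero_mul]
    · intro hb; exact absurd (Finset.mem_univ _) hb
  funext j
  by_cases hj : j.val = n - 1
  · rw [show j = ⟨n - 1, by omega⟩ from Fin.ext hj]; exact hlast
  · have hp := congrFun hx0 ⟨j.val + 1, by omega⟩
    rw [Matrix.mulVec, dotProduct] at hp
    have hrw : ∀ b : Fin n, Cr n v ⟨j.val + 1, by omega⟩ b * x b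
        = (if (j.val + 1 : ℕ) = b.val + 1 then 1 else 0) * x b := by
      intro b
      by_cases hb : b.val = n - 1
      · rw [show b = ⟨n - 1, by omega⟩ from Fin.ext hb, hlast, mul_zero, mul_zero]
      · rw [Cr_apply, if_neg hb]
    rw [Finset.sum_congr rfl (fun b _ => hrw b)] at hp
    rw [Finset.sum_eq_single j] at hp
    · rw [if_pos rfl, one_mul] at hp; exact hp
    · intro b _ hb
      rw [if_neg (by simp [Fin.ext_iff] at hb ⊢; omega), zero_mul]
    · intro hb; exact absurd (Finset.mem_univ _) hb


/-- Corollary (kernel of the horizontal Hankel extension): the extension matrix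
built from `A C_r(u^J)^t` has rank `n` and its kernel has the shifted copies of the
reversed vector `u^J` as a basis. -/
theorem hankel_extension_kernel
    (n : ℕ) (hn : 2 ≤ n)
    (u : Fin (n + 1) → ℝ) (hu1 : u 0 ≠ 0) (hun : u (Fin.last n) ≠ 0)
    (A : Matrix (Fin n) (Fin n) ℝ) (hA : IsUnit A.det)
    (s t : ℤ) (r : ℕ) (hr : 0 < r) (hrst : (r : ℤ) = s - t)
    (M : Matrix (Fin n) (Fin (n + r)) ℝ)
    (hM : ∀ (p : Fin n) (q : Fin (n + r)),
      M p q = if h : q.val < n then (A * Cr n (revVec u) ^ t) p ⟨q.val, h⟩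
        else (A * Cr n (revVec u) ^ (t + ((q.val - n + 1 : ℕ) : ℤ))) p ⟨n - 1, by omega⟩)
    (eJ : Fin r → Fin (n + r) → ℝ)
    (heJ : ∀ (i : Fin r) (p : Fin (n + r)),
      eJ i p = if h : r - 1 - i.val ≤ p.val ∧ p.val ≤ (r - 1 - i.val) + n
        then u ⟨n - (p.val - (r - 1 - i.val)), by omega⟩ else 0) :
    M.rank = n ∧ LinearIndependent ℝ eJ ∧
      Submodule.span ℝ (Set.range eJ) = LinearMap.ker M.mulVecLin := by
  classical
  have hn0 : 0 < n := by omega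
  have hv0 : revVec u 0 ≠ 0 := by
    show u (Fin.rev 0) ≠ 0
    have : Fin.rev (0 : Fin (n+1)) = Fin.last n := by ext; simp [Fin.val_rev]
    rw [this]; exact hun
  have hvl : revVec u (Fin.last n) ≠ 0 := by
    show u (Fin.rev (Fin.last n)) ≠ 0
    have : Fin.rev (Fin.last n) = (0 : Fin (n+1)) := by ext; simp [Fin.val_rev]
    rw [this]; exact hu1
  have hC : IsUnit (Cr n (revVec u)).det := Cr_det_isUnit (revVec u) hn0 hv0 hvl
  -- uniform column description of M
  have zpowApply : ∀ (k : ℕ) (j p : Fin n), j.val + k < n →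
      (Cr n (revVec u) ^ ((k : ℕ) : ℤ)) p j = if p.val = j.val + k then 1 else 0 := by
    intro k j p h
    rw [zpow_natCast]
    exact Cr_pow_apply (revVec u) k j p h
  have sumz : ∀ l : Fin n,
      ∑ m : Fin (n + 1), revVec u m * (Cr n (revVec u) ^ (((m : ℕ) : ℕ) : ℤ)) l ⟨0, hn0⟩ = 0 := by
    intro l
    rw [← Cr_sum (revVec u) hn0 hvl l]
    exact Finset.sum_congr rfl fun m _ => by rw [zpow_natCast]
  have Mcol : ∀ (p : Fin n) (q : Fin (n + r)),
      M p q = (A * Cr n (revVec u) ^ t * Cr n (revVec u) ^ ((q.val : ℕ) : ℤ)) p ⟨0, hn0⟩ := by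
    intro p q
    by_cases h : q.val < n
    · rw [hM p q, dif_pos h]
      conv_rhs => rw [Matrix.mul_apply]
      rw [Finset.sum_eq_single (⟨q.val, h⟩ : Fin n)]
      · rw [zpowApply q.val ⟨0, hn0⟩ ⟨q.val, h⟩ (by show 0 + q.val < n; omega),
          if_pos (by show (q.val : ℕ) = 0 + q.val; omega), mul_one]
      · intro b _ hb
        rw [zpowApply q.val ⟨0, hn0⟩ b (by show 0 + q.val < n; omega),
          if_neg (by intro hc; have hc' : b.val = 0 + q.val := hc; exact hb (Fin.ext (show b.val = q.val by omega))), mul_zero]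
      · intro hb; exact absurd (Finset.mem_univ _) hb
    · rw [hM p q, dif_neg h]
      have e2 : ((q.val : ℕ) : ℤ) = ((q.val - n + 1 : ℕ) : ℤ) + ((n - 1 : ℕ) : ℤ) := by omega
      conv_lhs => rw [Matrix.zpow_add hC, ← Matrix.mul_assoc]
      conv_rhs => rw [e2, Matrix.zpow_add hC, ← Matrix.mul_assoc, Matrix.mul_apply]
      rw [Finset.sum_eq_single (⟨n - 1, by omega⟩ : Fin n)]
      · rw [zpowApply (n-1) ⟨0, hn0⟩ ⟨n - 1, by omega⟩ (by show 0 + (n-1) < n; omega),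
          if_pos (by show (n - 1 : ℕ) = 0 + (n - 1); omega), mul_one]
      · intro b _ hb
        rw [zpowApply (n-1) ⟨0, hn0⟩ b (by show 0 + (n-1) < n; omega),
          if_neg (by intro hc; have hc' : b.val = 0 + (n - 1) := hc; exact hb (Fin.ext (show b.val = n - 1 by omega))), mul_zero]
      · intro hb; exact absurd (Finset.mem_univ _) hb
  -- kernel membership
  have hker : ∀ i : Fin r, M.mulVec (eJ i) = 0 := by
    intro i
    funext p
    have hfemb : ∀ m : Fin (n + 1), r - 1 - i.val + m.val < n + r := by
      intro m; have := m.isLt; have := i.isLt; omega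
    have hinj : Function.Injective
        (fun m : Fin (n + 1) => (⟨r - 1 - i.val + m.val, hfemb m⟩ : Fin (n + r))) := by
      intro a b hab; simp only [Fin.ext_iff, Fin.val_mk] at hab ⊢; omega
    simp only [Matrix.mulVec, dotProduct, Pi.zero_apply]
    rw [← Finset.sum_subset (Finset.subset_univ
        (Finset.univ.map ⟨fun m : Fin (n + 1) => (⟨r - 1 - i.val + m.val, hfemb m⟩ : Fin (n + r)), hinj⟩))
        ?_]
    · rw [Finset.sum_map]
      simp only [Function.Embedding.coeFn_mk]
      have key : ∀ m : Fin (n + 1),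
          M p ⟨r - 1 - i.val + m.val, hfemb m⟩ * eJ i ⟨r - 1 - i.val + m.val, hfemb m⟩
          = ∑ l, (A * Cr n (revVec u) ^ t * Cr n (revVec u) ^ ((r - 1 - i.val : ℕ) : ℤ)) p l
              * (revVec u m * (Cr n (revVec u) ^ (((m.val : ℕ) : ℕ) : ℤ)) l ⟨0, hn0⟩) := by
        intro m
        have h1 : eJ i ⟨r - 1 - i.val + m.val, hfemb m⟩ = revVec u m := by
          rw [heJ]
          rw [dif_pos ⟨by simp only [Fin.val_mk]; omega, by
            simp only [Fin.val_mk]; have := m.isLt; omega⟩]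
          show u _ = u m.rev
          congr 1
          rw [Fin.ext_iff]
          simp only [Fin.val_mk, Fin.val_rev]
          omega
        have h2 : M p ⟨r - 1 - i.val + m.val, hfemb m⟩
            = ∑ l, (A * Cr n (revVec u) ^ t * Cr n (revVec u) ^ ((r - 1 - i.val : ℕ) : ℤ)) p l
                * (Cr n (revVec u) ^ (((m.val : ℕ) : ℕ) : ℤ)) l ⟨0, hn0⟩ := by
          rw [Mcol]
          have ec : (((⟨r - 1 - i.val + m.val, hfemb m⟩ : Fin (n + r)).val : ℕ) : ℤ)
              = ((r - 1 - i.val : ℕ) : ℤ) + ((m.val : ℕ) : ℤ) := by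
            simp only [Fin.val_mk]; omega
          rw [ec, Matrix.zpow_add hC, ← Matrix.mul_assoc, Matrix.mul_apply]
        rw [h1, h2, Finset.sum_mul]
        exact Finset.sum_congr rfl fun l _ => by ring
      rw [Finset.sum_congr rfl fun m _ => key m, Finset.sum_comm]
      apply Finset.sum_eq_zero
      intro l _
      rw [← Finset.mul_sum, sumz l, mul_zero]
    · intro q _ hq
      have hcond : ¬ (r - 1 - i.val ≤ q.val ∧ q.val ≤ (r - 1 - i.val) + n) := by
        intro hc
        apply hq
        rw [Finset.mem_map]
        refine ⟨⟨q.val - (r - 1 - i.val), by omega⟩, Finset.mem_univ _, ?_⟩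
        simp only [Function.Embedding.coeFn_mk, Fin.ext_iff, Fin.val_mk]
        omega
      rw [heJ, dif_neg hcond, mul_zero]
  -- invertibility of the leading block
  have hBdet : IsUnit (A * Cr n (revVec u) ^ t).det := by
    rw [Matrix.det_mul]; exact hA.mul (hC.det_zpow t)
  -- surjectivity, hence rank n
  have hsurj : Function.Surjective M.mulVecLin := by
    intro y
    refine ⟨fun q => if h : q.val < n then ((A * Cr n (revVec u) ^ t)⁻¹ *ᵥ y) ⟨q.val, h⟩ else 0, ?_⟩
    funext p
    rw [Matrix.mulVecLin_apply]
    have hfe : ∀ j : Fin n, j.val < n + r := fun j => by have := j.isLt; omega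
    have hinj : Function.Injective (fun j : Fin n => (⟨j.val, hfe j⟩ : Fin (n + r))) := by
      intro a b hab; simpa only [Fin.ext_iff, Fin.val_mk] using hab
    show (∑ q, M p q * _) = y p
    rw [← Finset.sum_subset (Finset.subset_univ
        (Finset.univ.map ⟨fun j : Fin n => (⟨j.val, hfe j⟩ : Fin (n + r)), hinj⟩)) ?_]
    · rw [Finset.sum_map]
      simp only [Function.Embedding.coeFn_mk, Fin.val_mk]
      have : ∀ j : Fin n, M p ⟨j.val, hfe j⟩
          * (if h : (⟨j.val, hfe j⟩ : Fin (n+r)).val < n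
              then ((A * Cr n (revVec u) ^ t)⁻¹ *ᵥ y) ⟨(⟨j.val, hfe j⟩ : Fin (n+r)).val, h⟩ else 0)
          = (A * Cr n (revVec u) ^ t) p j * ((A * Cr n (revVec u) ^ t)⁻¹ *ᵥ y) j := by
        intro j
        rw [dif_pos (show ((⟨j.val, hfe j⟩ : Fin (n+r)).val < n) from j.isLt), hM,
          dif_pos (show ((⟨j.val, hfe j⟩ : Fin (n+r)).val < n) from j.isLt)]
      rw [Finset.sum_congr rfl fun j _ => this j]
      have : (∑ j, (A * Cr n (revVec u) ^ t) p j * ((A * Cr n (revVec u) ^ t)⁻¹ *ᵥ y) j)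
          = ((A * Cr n (revVec u) ^ t) *ᵥ ((A * Cr n (revVec u) ^ t)⁻¹ *ᵥ y)) p := rfl
      rw [this, Matrix.mulVec_mulVec, Matrix.mul_nonsing_inv _ hBdet, Matrix.one_mulVec]
    · intro q _ hq
      have : ¬ q.val < n := by
        intro hlt
        apply hq
        rw [Finset.mem_map]
        exact ⟨⟨q.val, hlt⟩, Finset.mem_univ _, by simp only [Function.Embedding.coeFn_mk, Fin.ext_iff, Fin.val_mk]⟩
      rw [dif_neg this, mul_zero]
  have hrank : M.rank = n := by
    show Module.finrank ℝ (LinearMap.range M.mulVecLin) = n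
    rw [LinearMap.range_eq_top.mpr hsurj, finrank_top]
    simp
  -- linear independence
  have hLI : LinearIndependent ℝ eJ := by
    rw [linearIndependent_iff']
    intro ss g hsum i hi
    by_contra hgi
    have hTne : (ss.filter (fun j => g j ≠ 0)).Nonempty :=
      ⟨i, Finset.mem_filter.mpr ⟨hi, hgi⟩⟩
    set i₀ := (ss.filter (fun j => g j ≠ 0)).max' hTne with hi₀
    have hi₀T := (ss.filter (fun j => g j ≠ 0)).max'_mem hTne
    have hi₀s : i₀ ∈ ss := (Finset.mem_filter.mp hi₀T).1
    have hgi₀ : g i₀ ≠ 0 := (Finset.mem_filter.mp hi₀T).2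
    have hpos : (r - 1 - i₀.val) < n + r := by have := i₀.isLt; omega
    have heval := congrFun hsum ⟨r - 1 - i₀.val, hpos⟩
    simp only [Finset.sum_apply, Pi.smul_apply, smul_eq_mul, Pi.zero_apply] at heval
    rw [Finset.sum_eq_single_of_mem i₀ hi₀s ?_] at heval
    · rw [heJ, dif_pos ⟨le_refl _, by simp only [Fin.val_mk]; omega⟩] at heval
      have : u ⟨n - ((⟨r - 1 - i₀.val, hpos⟩ : Fin (n+r)).val - (r - 1 - i₀.val)), by omega⟩
          = u (Fin.last n) := by
        congr 1
        rw [Fin.ext_iff]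
        simp only [Fin.val_mk, Fin.val_last]
        omega
      rw [this] at heval
      exact hgi₀ ((mul_eq_zero.mp heval).resolve_right hun)
    · intro b hb hne
      have hbz : g b = 0 ∨ b < i₀ := by
        by_cases hgb : g b = 0
        · exact Or.inl hgb
        · right
          have : b ∈ ss.filter (fun j => g j ≠ 0) := Finset.mem_filter.mpr ⟨hb, hgb⟩
          exact lt_of_le_of_ne (Finset.le_max' _ _ this) hne
      rcases hbz with hgb | hlt
      · rw [hgb, zero_mul]
      · have : ¬ (r - 1 - b.val ≤ (⟨r - 1 - i₀.val, hpos⟩ : Fin (n+r)).val ∧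
            (⟨r - 1 - i₀.val, hpos⟩ : Fin (n+r)).val ≤ (r - 1 - b.val) + n) := by
          simp only [Fin.val_mk]
          intro hc
          have hb' := b.isLt
          have hi' := i₀.isLt
          have : b.val < i₀.val := hlt
          omega
        rw [heJ, dif_neg this, mul_zero]
  refine ⟨hrank, hLI, ?_⟩
  -- span = kernel by dimension count
  have hle : Submodule.span ℝ (Set.range eJ) ≤ LinearMap.ker M.mulVecLin := by
    rw [Submodule.span_le]
    rintro _ ⟨i, rfl⟩
    rw [SetLike.mem_coe, LinearMap.mem_ker, Matrix.mulVecLin_apply]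
    exact hker i
  have hdimtot : Module.finrank ℝ (Fin (n + r) → ℝ) = n + r := by simp
  have h1 := LinearMap.finrank_range_add_finrank_ker M.mulVecLin
  have h2 : Module.finrank ℝ (LinearMap.range M.mulVecLin) = n := hrank
  have hkerdim : Module.finrank ℝ (LinearMap.ker M.mulVecLin) = r := by
    rw [hdimtot, h2] at h1; omega
  have hspdim : Module.finrank ℝ (Submodule.span ℝ (Set.range eJ)) = r := by
    rw [finrank_span_eq_card hLI, Fintype.card_fin]
  exact Submodule.eq_of_le_of_finrank_le hle (by rw [hkerdim, hspdim])
end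
end

section
/- Let n ≥ 2, let T be an n×n real Toeplitz matrix, and let u = (u₁,…,u_{n+1}) ∈ ℝ^{n+1} with u₁ ≠ 0 and u_{n+1} ≠ 0. If u lies in the kernel of ∂T, then C_t(u)·T and C_b(u)·T are Toeplitz matrices and u lies in the kernel of ∂(C_t(u)·T) and in the kernel of ∂(C_b(u)·T). -/
open Matrix Polynomial

noncomputable section

namespace ToepAux

def diagOf (n : ℕ) (T : Matrix (Fin n) (Fin n) ℝ) : ℤ → ℝ := fun d =>
  if h : 0 ≤ d ∧ d < n then T ⟨d.toNat, by omega⟩ ⟨0, by omega⟩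
  else if h' : 0 < -d ∧ -d < n then T ⟨0, by omega⟩ ⟨(-d).toNat, by omega⟩ else 0

variable {n : ℕ} {T : Matrix (Fin n) (Fin n) ℝ} {u : Fin (n + 1) → ℝ}

lemma toep_shift (hT : IsToeplitz T) (k : ℕ) :
    ∀ (a b : ℕ) (h1 : a + k < n) (h2 : b + k < n),
      T ⟨a + k, h1⟩ ⟨b + k, h2⟩ = T ⟨a, by omega⟩ ⟨b, by omega⟩ := by
  induction k with
  | zero => intro a b h1 h2; rfl
  | succ k ih =>
    intro a b h1 h2
    have h := hT ⟨a + k, by omega⟩ ⟨b + k, by omega⟩ h1 h2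
    exact h.trans (ih a b (by omega) (by omega))

lemma diag_eq (hT : IsToeplitz T) (i j : Fin n) :
    T i j = diagOf n T ((i.val : ℤ) - j.val) := by
  have hi := i.isLt; have hj := j.isLt
  rcases le_or_gt j.val i.val with h | h
  · have hd : diagOf n T ((i.val : ℤ) - j.val) = T ⟨i.val - j.val, by omega⟩ ⟨0, by omega⟩ := by
      unfold diagOf
      rw [dif_pos (by constructor <;> omega)]
      congr 1 <;> apply Fin.ext <;> simp <;> omega
    rw [hd]
    have h2 := toep_shift hT j.val (i.val - j.val) 0 (by omega) (by omega)
    rw [← h2]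
    congr 1 <;> apply Fin.ext <;> simp <;> omega
  · have hd : diagOf n T ((i.val : ℤ) - j.val) = T ⟨0, by omega⟩ ⟨j.val - i.val, by omega⟩ := by
      unfold diagOf
      rw [dif_neg (by omega), dif_pos (by constructor <;> omega)]
      congr 1 <;> apply Fin.ext <;> simp <;> omega
    rw [hd]
    have h2 := toep_shift hT i.val 0 (j.val - i.val) (by omega) (by omega)
    rw [← h2]
    congr 1 <;> apply Fin.ext <;> simp <;> omega

lemma hK (hT : IsToeplitz T) (hker : (dT T).mulVec u = 0) (s : ℤ)
    (h1 : 1 ≤ s) (h2 : s ≤ (n : ℤ) - 1) :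
    ∑ j : Fin (n + 1), diagOf n T (s - (j.val : ℤ)) * u j = 0 := by
  have hn : 2 ≤ n := by omega
  have hi : (s - 1).toNat < n - 1 := by omega
  have h0 := congrFun hker ⟨(s - 1).toNat, hi⟩
  simp only [Matrix.mulVec, dotProduct, Pi.zero_apply] at h0
  rw [← h0]
  refine Finset.sum_congr rfl fun j _ => ?_
  congr 1
  unfold dT
  simp only [Matrix.of_apply]
  split
  · rename_i hj
    rw [diag_eq hT]
    congr 1
    simp only
    omega
  · rename_i hj
    rw [diag_eq hT]
    congr 1
    simp only
    omega

lemma truncK (hT : IsToeplitz T) (hker : (dT T).mulVec u = 0) (s : ℤ)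
    (h1 : 1 ≤ s) (h2 : s ≤ (n : ℤ) - 1) :
    ∑ m : Fin n, diagOf n T (s - (m.val : ℤ)) * u ⟨m.val, by omega⟩
      = -(diagOf n T (s - n) * u (Fin.last n)) := by
  have h := hK hT hker s h1 h2
  rw [Fin.sum_univ_castSucc] at h
  have hl : (Fin.last n).val = n := rfl
  have : ∑ m : Fin n, diagOf n T (s - ((Fin.castSucc m).val : ℤ)) * u (Fin.castSucc m)
      = ∑ m : Fin n, diagOf n T (s - (m.val : ℤ)) * u ⟨m.val, by omega⟩ := by
    refine Finset.sum_congr rfl fun m _ => by rfl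
  rw [this] at h
  have key : diagOf n T (s - (((Fin.last n).val : ℕ) : ℤ)) * u (Fin.last n)
      = diagOf n T (s - (n : ℤ)) * u (Fin.last n) := rfl
  linarith

lemma truncK0 (hT : IsToeplitz T) (hker : (dT T).mulVec u = 0) (s : ℤ)
    (h1 : 1 ≤ s) (h2 : s ≤ (n : ℤ) - 1) :
    ∑ m : Fin n, diagOf n T (s - ((m.val : ℤ) + 1)) * u ⟨m.val + 1, by omega⟩
      = -(diagOf n T s * u 0) := by
  have h := hK hT hker s h1 h2
  rw [Fin.sum_univ_succ] at h
  have : ∑ m : Fin n, diagOf n T (s - ((m.succ).val : ℤ)) * u m.succ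
      = ∑ m : Fin n, diagOf n T (s - ((m.val : ℤ) + 1)) * u ⟨m.val + 1, by omega⟩ := by
    refine Finset.sum_congr rfl fun m _ => ?_
    rw [show ((m.succ.val : ℕ) : ℤ) = (m.val : ℤ) + 1 by simp,
      show m.succ = (⟨m.val + 1, by omega⟩ : Fin (n + 1)) from rfl]
  rw [this] at h
  have h00 : ((0 : Fin (n+1)).val : ℤ) = 0 := rfl
  rw [h00, sub_zero] at h
  linarith


lemma A_low (hT : IsToeplitz T) (i j : Fin n) (hi : i.val ≠ 0) :
    (Ct n u * T) i j = diagOf n T ((i.val : ℤ) - 1 - j.val) := by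
  rw [Matrix.mul_apply]
  rw [Finset.sum_eq_single (⟨i.val - 1, by have := i.isLt; omega⟩ : Fin n)]
  · unfold Ct
    simp only [Matrix.of_apply]
    rw [if_neg hi, if_pos (show i.val - 1 + 1 = i.val by omega), one_mul, diag_eq hT]
    congr 1 <;> (simp only [Fin.val_mk]; omega)
  · intro b _ hb
    unfold Ct
    simp only [Matrix.of_apply]
    rw [if_neg hi, if_neg (fun h => hb (Fin.ext (by simp; omega))), zero_mul]
  · intro h; exact absurd (Finset.mem_univ _) h

lemma A_top_raw (hn : 2 ≤ n) (hT : IsToeplitz T) (j : Fin n) :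
    (Ct n u * T) ⟨0, by omega⟩ j
      = -(∑ m : Fin n, diagOf n T ((n : ℤ) - 1 - m.val - j.val) * u ⟨m.val, by omega⟩)
          / u (Fin.last n) := by
  rw [Matrix.mul_apply, ← Finset.sum_neg_distrib, Finset.sum_div]
  refine Fintype.sum_bijective Fin.rev Fin.rev_bijective _ _ fun k => ?_
  have hct : Ct n u ⟨0, by omega⟩ k = -u ⟨n - 1 - k.val, by omega⟩ / u (Fin.last n) := by
    unfold Ct; simp
  rw [hct, diag_eq hT]
  have hrv : (k.rev).val = n - 1 - k.val := by simp [Fin.rev]; omega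
  rw [show ((n : ℤ) - 1 - (k.rev).val - j.val) = ((k.val : ℤ) - j.val) by
    rw [hrv]; have := k.isLt; omega]
  rw [show (⟨(k.rev).val, by have := k.rev.isLt; omega⟩ : Fin (n + 1))
      = ⟨n - 1 - k.val, by omega⟩ from Fin.ext (by simpa using hrv)]
  ring

lemma A_top (hn : 2 ≤ n) (hT : IsToeplitz T) (hker : (dT T).mulVec u = 0)
    (hun : u (Fin.last n) ≠ 0) (j : Fin n) (hj : j.val + 1 < n) :
    (Ct n u * T) ⟨0, by omega⟩ j = diagOf n T (-1 - (j.val : ℤ)) := by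
  rw [A_top_raw hn hT]
  rw [show (∑ m : Fin n, diagOf n T ((n : ℤ) - 1 - m.val - j.val) * u ⟨m.val, by omega⟩)
      = ∑ m : Fin n, diagOf n T (((n : ℤ) - 1 - j.val) - m.val) * u ⟨m.val, by omega⟩ by
    refine Finset.sum_congr rfl fun m _ => by ring_nf]
  rw [truncK hT hker ((n : ℤ) - 1 - j.val) (by omega) (by omega)]
  rw [show ((n : ℤ) - 1 - j.val - n) = (-1 - (j.val : ℤ)) by ring,
    neg_neg, mul_div_assoc, div_self hun, mul_one]

lemma B_low (hT : IsToeplitz T) (i j : Fin n) (hi : i.val ≠ n - 1) :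
    (Cb n u * T) i j = diagOf n T ((i.val : ℤ) + 1 - j.val) := by
  rw [Matrix.mul_apply]
  rw [Finset.sum_eq_single (⟨i.val + 1, by have := i.isLt; omega⟩ : Fin n)]
  · unfold Cb
    simp only [Matrix.of_apply]
    rw [if_neg hi, if_pos (by simp), one_mul, diag_eq hT]
    congr 1 <;> (simp only [Fin.val_mk]; omega)
  · intro b _ hb
    unfold Cb
    simp only [Matrix.of_apply]
    rw [if_neg hi, if_neg (fun h => hb (Fin.ext (by simpa using h))), zero_mul]
  · intro h; exact absurd (Finset.mem_univ _) h

lemma B_bot_raw (hn : 2 ≤ n) (hT : IsToeplitz T) (j : Fin n) :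
    (Cb n u * T) ⟨n - 1, by omega⟩ j
      = -(∑ m : Fin n, diagOf n T ((n : ℤ) - 1 - m.val - j.val) * u ⟨m.val + 1, by omega⟩)
          / u 0 := by
  rw [Matrix.mul_apply, ← Finset.sum_neg_distrib, Finset.sum_div]
  refine Fintype.sum_bijective Fin.rev Fin.rev_bijective _ _ fun k => ?_
  have hcb : Cb n u ⟨n - 1, by omega⟩ k = -u ⟨n - k.val, by omega⟩ / u 0 := by
    unfold Cb; simp
  rw [hcb, diag_eq hT]
  have hrv : (k.rev).val = n - 1 - k.val := by simp [Fin.rev]; omega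
  rw [show ((n : ℤ) - 1 - (k.rev).val - j.val) = ((k.val : ℤ) - j.val) by
    rw [hrv]; have := k.isLt; omega]
  rw [show (⟨(k.rev).val + 1, by have := k.rev.isLt; omega⟩ : Fin (n + 1))
      = ⟨n - k.val, by omega⟩ from Fin.ext (by simp [hrv]; have := k.isLt; omega)]
  ring

lemma B_bot (hn : 2 ≤ n) (hT : IsToeplitz T) (hker : (dT T).mulVec u = 0)
    (hu1 : u 0 ≠ 0) (j : Fin n) (hj : j.val ≠ 0) :
    (Cb n u * T) ⟨n - 1, by omega⟩ j = diagOf n T ((n : ℤ) - j.val) := by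
  rw [B_bot_raw hn hT]
  rw [show (∑ m : Fin n, diagOf n T ((n : ℤ) - 1 - m.val - j.val) * u ⟨m.val + 1, by omega⟩)
      = ∑ m : Fin n, diagOf n T (((n : ℤ) - j.val) - ((m.val : ℤ) + 1)) * u ⟨m.val + 1, by omega⟩ by
    refine Finset.sum_congr rfl fun m _ => by ring_nf]
  rw [truncK0 hT hker ((n : ℤ) - j.val) (by have := j.isLt; omega) (by omega),
    neg_neg, mul_div_assoc, div_self hu1, mul_one]

end ToepAux

/-- Lemma (kernel shift, Toeplitz version): if `u ∈ ker ∂T` for a Toeplitz matrix `T`,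
then `C_t(u)T` and `C_b(u)T` are Toeplitz and `u` lies in the kernels of
`∂(C_t(u)T)` and `∂(C_b(u)T)`. -/
theorem toeplitz_kernel_shift
    (n : ℕ) (hn : 2 ≤ n) (T : Matrix (Fin n) (Fin n) ℝ) (hT : IsToeplitz T)
    (u : Fin (n + 1) → ℝ) (hu1 : u 0 ≠ 0) (hun : u (Fin.last n) ≠ 0)
    (hker : (dT T).mulVec u = 0) :
    IsToeplitz (Ct n u * T) ∧ IsToeplitz (Cb n u * T) ∧
      (dT (Ct n u * T)).mulVec u = 0 ∧ (dT (Cb n u * T)).mulVec u = 0 := by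
  refine ⟨?_, ?_, ?_, ?_⟩
  · -- Ct * T Toeplitz
    intro i j hi hj
    by_cases h0 : i.val = 0
    · have hi0 : i = (⟨0, by omega⟩ : Fin n) := by
        apply Fin.ext
        simpa using h0
      have e3 : (Ct n u * T) i j = (Ct n u * T) ⟨0, by omega⟩ j := by rw [hi0]
      rw [ToepAux.A_low hT ⟨i.val + 1, hi⟩ ⟨j.val + 1, hj⟩ (by simp only [Fin.val_mk]; omega),
        e3, ToepAux.A_top hn hT hker hun j hj]
      congr 1
      simp only [Fin.val_mk]
      omega
    · rw [ToepAux.A_low hT ⟨i.val + 1, hi⟩ ⟨j.val + 1, hj⟩ (by simp only [Fin.val_mk]; omega),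
        ToepAux.A_low hT i j h0]
      congr 1
      simp only [Fin.val_mk]
      omega
  · -- Cb * T Toeplitz
    intro i j hi hj
    by_cases h0 : i.val + 1 = n - 1
    · rw [show (⟨i.val + 1, hi⟩ : Fin n) = ⟨n - 1, by omega⟩ from Fin.ext h0,
        ToepAux.B_bot hn hT hker hu1 ⟨j.val + 1, hj⟩ (by simp only [Fin.val_mk]; omega),
        ToepAux.B_low hT i j (by omega)]
      congr 1
      simp only [Fin.val_mk]
      omega
    · rw [ToepAux.B_low hT ⟨i.val + 1, hi⟩ ⟨j.val + 1, hj⟩ (by simp only [Fin.val_mk]; omega),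
        ToepAux.B_low hT i j (by have := i.isLt; omega)]
      congr 1
      simp only [Fin.val_mk]
      omega
  · -- kernel of Ct * T
    funext r
    have hr := r.isLt
    simp only [Matrix.mulVec, dotProduct, Pi.zero_apply]
    by_cases h0 : r.val = 0
    · have hsum : ∑ j : Fin (n + 1), dT (Ct n u * T) r j * u j
          = ∑ j : Fin (n + 1),
              (if j.val = n then (Ct n u * T) ⟨0, by omega⟩ ⟨n - 1, by omega⟩
               else ToepAux.diagOf n T (-(j.val : ℤ))) * u j := by
        refine Finset.sum_congr rfl fun j _ => ?_
        congr 1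
        unfold dT
        simp only [Matrix.of_apply]
        by_cases hj0 : j.val = 0
        · rw [if_pos hj0, if_neg (by omega),
            ToepAux.A_low hT ⟨r.val + 1, by omega⟩ ⟨0, by omega⟩
              (by simp only [Fin.val_mk]; omega)]
          congr 1
          simp only [Fin.val_mk]
          omega
        · rw [if_neg hj0]
          by_cases hjn : j.val = n
          · rw [if_pos hjn,
              show (⟨r.val, by omega⟩ : Fin n) = ⟨0, by omega⟩ from Fin.ext h0,
              show (⟨j.val - 1, by omega⟩ : Fin n) = ⟨n - 1, by omega⟩ from Fin.ext (by
                simp only [Fin.val_mk]; omega)]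
          · rw [if_neg hjn,
              show (⟨r.val, by omega⟩ : Fin n) = ⟨0, by omega⟩ from Fin.ext h0,
              ToepAux.A_top hn hT hker hun ⟨j.val - 1, by have := j.isLt; omega⟩
                (by simp only [Fin.val_mk]; have := j.isLt; omega)]
            congr 1
            simp only [Fin.val_mk]
            omega
      rw [hsum, Fin.sum_univ_castSucc]
      have hlast : ((Fin.last n).val : ℕ) = n := rfl
      rw [if_pos hlast]
      have hA : (Ct n u * T) ⟨0, by omega⟩ ⟨n - 1, by omega⟩ * u (Fin.last n)
          = -∑ m : Fin n, ToepAux.diagOf n T (-(m.val : ℤ)) * u ⟨m.val, by omega⟩ := by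
        rw [ToepAux.A_top_raw hn hT ⟨n - 1, by omega⟩, div_mul_cancel₀ _ hun]
        congr 1
        refine Finset.sum_congr rfl fun m _ => ?_
        congr 1
        congr 1
        simp only [Fin.val_mk]
        have := m.isLt
        omega
      rw [hA]
      have hcs : ∑ j : Fin n,
          (if ((Fin.castSucc j).val : ℕ) = n then (Ct n u * T) ⟨0, by omega⟩ ⟨n - 1, by omega⟩
           else ToepAux.diagOf n T (-((Fin.castSucc j).val : ℤ))) * u (Fin.castSucc j)
          = ∑ m : Fin n, ToepAux.diagOf n T (-(m.val : ℤ)) * u ⟨m.val, by omega⟩ := by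
        refine Finset.sum_congr rfl fun j _ => ?_
        rw [if_neg (by simp only [Fin.coe_castSucc]; omega)]
        rfl
      rw [hcs]
      ring
    · have hsum : ∑ j : Fin (n + 1), dT (Ct n u * T) r j * u j
          = ∑ j : Fin (n + 1), ToepAux.diagOf n T ((r.val : ℤ) - j.val) * u j := by
        refine Finset.sum_congr rfl fun j _ => ?_
        congr 1
        unfold dT
        simp only [Matrix.of_apply]
        by_cases hj0 : j.val = 0
        · rw [if_pos hj0,
            ToepAux.A_low hT ⟨r.val + 1, by omega⟩ ⟨0, by omega⟩
              (by simp only [Fin.val_mk]; omega)]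
          congr 1
          simp only [Fin.val_mk]
          omega
        · rw [if_neg hj0,
            ToepAux.A_low hT ⟨r.val, by omega⟩ ⟨j.val - 1, by have := j.isLt; omega⟩
              (by simp only [Fin.val_mk]; omega)]
          congr 1
          simp only [Fin.val_mk]
          omega
      rw [hsum]
      exact ToepAux.hK hT hker (r.val : ℤ) (by omega) (by omega)
  · -- kernel of Cb * T
    funext r
    have hr := r.isLt
    simp only [Matrix.mulVec, dotProduct, Pi.zero_apply]
    by_cases h0 : r.val = n - 2
    · have hsum : ∑ j : Fin (n + 1), dT (Cb n u * T) r j * u j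
          = ∑ j : Fin (n + 1),
              (if j.val = 0 then (Cb n u * T) ⟨n - 1, by omega⟩ ⟨0, by omega⟩
               else ToepAux.diagOf n T ((n : ℤ) - j.val)) * u j := by
        refine Finset.sum_congr rfl fun j _ => ?_
        congr 1
        unfold dT
        simp only [Matrix.of_apply]
        by_cases hj0 : j.val = 0
        · rw [if_pos hj0, if_pos hj0,
            show (⟨r.val + 1, by omega⟩ : Fin n) = ⟨n - 1, by omega⟩ from Fin.ext (by
              simp only [Fin.val_mk]; omega),
            show (⟨0, by omega⟩ : Fin n) = ⟨0, by omega⟩ from rfl]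
        · rw [if_neg hj0, if_neg hj0,
            ToepAux.B_low hT ⟨r.val, by omega⟩ ⟨j.val - 1, by have := j.isLt; omega⟩
              (by simp only [Fin.val_mk]; omega)]
          congr 1
          simp only [Fin.val_mk]
          omega
      rw [hsum, Fin.sum_univ_succ]
      have h00 : ((0 : Fin (n + 1)).val : ℕ) = 0 := rfl
      rw [if_pos h00]
      have hB : (Cb n u * T) ⟨n - 1, by omega⟩ ⟨0, by omega⟩ * u 0
          = -∑ m : Fin n, ToepAux.diagOf n T ((n : ℤ) - 1 - m.val) * u ⟨m.val + 1, by omega⟩ := by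
        rw [ToepAux.B_bot_raw hn hT ⟨0, by omega⟩, div_mul_cancel₀ _ hu1]
        congr 1
        refine Finset.sum_congr rfl fun m _ => ?_
        congr 1
        congr 1
        simp only [Fin.val_mk]
        omega
      rw [hB]
      have hcs : ∑ m : Fin n,
          (if ((m.succ).val : ℕ) = 0 then (Cb n u * T) ⟨n - 1, by omega⟩ ⟨0, by omega⟩
           else ToepAux.diagOf n T ((n : ℤ) - (m.succ).val)) * u m.succ
          = ∑ m : Fin n, ToepAux.diagOf n T ((n : ℤ) - 1 - m.val) * u ⟨m.val + 1, by omega⟩ := by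
        refine Finset.sum_congr rfl fun m _ => ?_
        rw [if_neg (by simp only [Fin.val_succ]; omega)]
        rw [show ((n : ℤ) - ((m.succ).val : ℕ)) = (n : ℤ) - 1 - m.val by
            simp only [Fin.val_succ]; push_cast; ring,
          show m.succ = (⟨m.val + 1, by omega⟩ : Fin (n + 1)) from rfl]
      rw [hcs]
      ring
    · have hsum : ∑ j : Fin (n + 1), dT (Cb n u * T) r j * u j
          = ∑ j : Fin (n + 1), ToepAux.diagOf n T ((r.val : ℤ) + 2 - j.val) * u j := by
        refine Finset.sum_congr rfl fun j _ => ?_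
        congr 1
        unfold dT
        simp only [Matrix.of_apply]
        by_cases hj0 : j.val = 0
        · rw [if_pos hj0,
            ToepAux.B_low hT ⟨r.val + 1, by omega⟩ ⟨0, by omega⟩
              (by simp only [Fin.val_mk]; omega)]
          congr 1
          simp only [Fin.val_mk]
          omega
        · rw [if_neg hj0,
            ToepAux.B_low hT ⟨r.val, by omega⟩ ⟨j.val - 1, by have := j.isLt; omega⟩
              (by simp only [Fin.val_mk]; omega)]
          congr 1
          simp only [Fin.val_mk]
          omega
      rw [hsum]
      exact ToepAux.hK hT hker ((r.val : ℤ) + 2) (by omega) (by omega)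
end
end

section
/- Let n ≥ 2, let H be an n×n real Hankel matrix, and let u = (u₁,…,u_{n+1}) ∈ ℝ^{n+1} with u₁ ≠ 0 and u_{n+1} ≠ 0. If the reversed vector u^J lies in the kernel of ∂H, then C_t(u)·H and C_b(u)·H are Hankel matrices and u^J lies in the kernel of ∂(C_t(u)·H) and in the kernel of ∂(C_b(u)·H). -/
open Matrix Polynomial

noncomputable section

namespace HankelAux

variable {n : ℕ}

def aOf (H : Matrix (Fin n) (Fin n) ℝ) (m : ℕ) : ℝ :=
  if h : m < n then H ⟨0, by omega⟩ ⟨m, h⟩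
  else if h2 : m - (n - 1) < n then H ⟨m - (n - 1), h2⟩ ⟨n - 1, by omega⟩ else 0

lemma aOf_eq (H : Matrix (Fin n) (Fin n) ℝ) (hH : IsHankel H) :
    ∀ (k : ℕ) (hk : k < n) (j : Fin n), H ⟨k, hk⟩ j = aOf H (k + j.val) := by
  intro k
  induction k with
  | zero =>
    intro hk j
    have hj : 0 + j.val < n := by simp [j.isLt]
    simp only [aOf, dif_pos hj]
    congr 1
    ext; simp
  | succ k IH =>
    intro hk j
    by_cases hj : j.val + 1 < n
    · have h1 : H ⟨k + 1, hk⟩ j = H ⟨k, by omega⟩ ⟨j.val + 1, hj⟩ := by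
        have h2 := hH ⟨k, by omega⟩ j (by simpa using hk) hj
        simpa using h2
      rw [h1, IH (by omega) ⟨j.val + 1, hj⟩]
      congr 1; simp; omega
    · have hje : j.val = n - 1 := by have := j.isLt; omega
      have hm : ¬ (k + 1 + j.val < n) := by omega
      have hm2 : (k + 1 + j.val) - (n - 1) < n := by omega
      simp only [aOf, dif_neg hm, dif_pos hm2]
      congr 1
      · ext; simp; omega
      · ext; simp; omega

lemma aOf_apply (H : Matrix (Fin n) (Fin n) ℝ) (hH : IsHankel H) (i j : Fin n) :
    H i j = aOf H (i.val + j.val) := by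
  simpa using aOf_eq H hH i.val i.isLt j

lemma dH_apply (H : Matrix (Fin n) (Fin n) ℝ) (hH : IsHankel H)
    (i : Fin (n - 1)) (j : Fin (n + 1)) :
    dH H i j = aOf H (i.val + j.val) := by
  simp only [dH, Matrix.of_apply]
  by_cases h : j.val < n
  · rw [dif_pos h, aOf_apply H hH]
  · have hj : j.val = n := by have := j.isLt; omega
    rw [dif_neg h, aOf_apply H hH]
    congr 1
    have := i.isLt; simp; omega

end HankelAux
namespace HankelAux
variable {n : ℕ}

lemma kerSum (H : Matrix (Fin n) (Fin n) ℝ) (hH : IsHankel H) (u : Fin (n + 1) → ℝ)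
    (hker : (dH H).mulVec (revVec u) = 0) (k : ℕ) (hk : k + 2 ≤ n) :
    ∑ j : Fin (n + 1), aOf H (k + j.val) * u (Fin.rev j) = 0 := by
  have h := congrFun hker ⟨k, by omega⟩
  simp only [Matrix.mulVec, dotProduct, Pi.zero_apply] at h
  rw [← h]
  refine Finset.sum_congr rfl fun j _ => ?_
  rw [dH_apply H hH]
  rfl

lemma kerA (H : Matrix (Fin n) (Fin n) ℝ) (hH : IsHankel H) (u : Fin (n + 1) → ℝ)
    (hker : (dH H).mulVec (revVec u) = 0) (k : ℕ) (hk : k + 2 ≤ n) :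
    ∑ m : Fin n, aOf H (k + 1 + m.val) * u ⟨n - 1 - m.val, by omega⟩
      = -(u (Fin.last n) * aOf H k) := by
  have h := kerSum H hH u hker k hk
  rw [Fin.sum_univ_succ] at h
  have h0 : Fin.rev (0 : Fin (n + 1)) = Fin.last n := by ext; simp
  rw [h0] at h
  have hterm : ∀ m : Fin n, aOf H (k + (Fin.succ m).val) * u (Fin.rev (Fin.succ m))
      = aOf H (k + 1 + m.val) * u ⟨n - 1 - m.val, by omega⟩ := by
    intro m
    congr 1
    · congr 1; simp [Fin.val_succ]; omega
    · congr 1; ext; simp [Fin.val_rev]; omega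
  rw [Finset.sum_congr rfl fun m _ => hterm m] at h
  simp only [Fin.val_zero, Nat.add_zero] at h
  linarith

lemma kerB (H : Matrix (Fin n) (Fin n) ℝ) (hH : IsHankel H) (u : Fin (n + 1) → ℝ)
    (hker : (dH H).mulVec (revVec u) = 0) (k : ℕ) (hk : k + 2 ≤ n) :
    ∑ m : Fin n, aOf H (k + m.val) * u ⟨n - m.val, by omega⟩
      = -(u 0 * aOf H (k + n)) := by
  have h := kerSum H hH u hker k hk
  rw [Fin.sum_univ_castSucc] at h
  have h0 : Fin.rev (Fin.last n) = 0 := by ext; simp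
  rw [h0] at h
  have hterm : ∀ m : Fin n, aOf H (k + (Fin.castSucc m).val) * u (Fin.rev (Fin.castSucc m))
      = aOf H (k + m.val) * u ⟨n - m.val, by omega⟩ := by
    intro m
    have hr : Fin.rev (Fin.castSucc m) = (⟨n - m.val, by omega⟩ : Fin (n + 1)) := by
      ext; simp [Fin.val_rev]
    rw [hr, Fin.coe_castSucc]
  rw [Finset.sum_congr rfl fun m _ => hterm m] at h
  simp only [Fin.val_last] at h
  linarith

end HankelAux
namespace HankelAux
variable {n : ℕ}

lemma ctH_apply (H : Matrix (Fin n) (Fin n) ℝ) (hH : IsHankel H) (u : Fin (n + 1) → ℝ)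
    (hun : u (Fin.last n) ≠ 0)
    (hker : (dH H).mulVec (revVec u) = 0) (i j : Fin n) (hij : 1 ≤ i.val + j.val) :
    (Ct n u * H) i j = aOf H (i.val + j.val - 1) := by
  rw [Matrix.mul_apply]
  by_cases hi : i.val = 0
  · have hj1 : 1 ≤ j.val := by omega
    have hk := kerA H hH u hker (j.val - 1) (by have := j.isLt; omega)
    have hterm : ∀ k : Fin n, Ct n u i k * H k j
        = -(u ⟨n - 1 - k.val, by omega⟩ / u (Fin.last n))
            * aOf H (j.val - 1 + 1 + k.val) := by
      intro k
      rw [Ct, Matrix.of_apply, if_pos hi, aOf_apply H hH, neg_div]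
      have ha : aOf H (k.val + j.val) = aOf H (j.val - 1 + 1 + k.val) := by
        congr 1; omega
      rw [ha]
    calc ∑ k : Fin n, Ct n u i k * H k j
        = ∑ k : Fin n, -(u ⟨n - 1 - k.val, by omega⟩ / u (Fin.last n))
            * aOf H (j.val - 1 + 1 + k.val) := Finset.sum_congr rfl fun k _ => hterm k
      _ = (-(1 / u (Fin.last n)))
            * ∑ k : Fin n, aOf H (j.val - 1 + 1 + k.val) * u ⟨n - 1 - k.val, by omega⟩ := by
          rw [Finset.mul_sum]
          refine Finset.sum_congr rfl fun k _ => ?_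
          ring
      _ = (-(1 / u (Fin.last n))) * (-(u (Fin.last n) * aOf H (j.val - 1))) := by rw [hk]
      _ = aOf H (j.val - 1) := by field_simp
      _ = aOf H (i.val + j.val - 1) := by congr 1; omega
  · have hterm : ∀ k : Fin n, Ct n u i k
        = if k = (⟨i.val - 1, by omega⟩ : Fin n) then 1 else 0 := by
      intro k
      rw [Ct, Matrix.of_apply, if_neg hi]
      by_cases h : k.val + 1 = i.val
      · rw [if_pos h, if_pos (by ext; simp; omega)]
      · rw [if_neg h, if_neg]
        intro hc
        apply h
        rw [hc]
        simp; omega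
    simp only [hterm, ite_mul, one_mul, zero_mul]
    rw [Finset.sum_ite_eq' Finset.univ _ (fun k => H k j), if_pos (Finset.mem_univ _)]
    rw [aOf_apply H hH]
    congr 1; simp; omega

lemma cbH_apply (H : Matrix (Fin n) (Fin n) ℝ) (hH : IsHankel H) (u : Fin (n + 1) → ℝ)
    (hu1 : u 0 ≠ 0)
    (hker : (dH H).mulVec (revVec u) = 0) (i j : Fin n) (hij : i.val + j.val + 3 ≤ 2 * n) :
    (Cb n u * H) i j = aOf H (i.val + j.val + 1) := by
  rw [Matrix.mul_apply]
  by_cases hi : i.val = n - 1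
  · have hj1 : j.val + 2 ≤ n := by omega
    have hk := kerB H hH u hker j.val hj1
    have hterm : ∀ k : Fin n, Cb n u i k * H k j
        = -(u ⟨n - k.val, by omega⟩ / u 0) * aOf H (j.val + k.val) := by
      intro k
      rw [Cb, Matrix.of_apply, if_pos hi, aOf_apply H hH, neg_div]
      have ha : aOf H (k.val + j.val) = aOf H (j.val + k.val) := by
        congr 1; omega
      rw [ha]
    calc ∑ k : Fin n, Cb n u i k * H k j
        = ∑ k : Fin n, -(u ⟨n - k.val, by omega⟩ / u 0) * aOf H (j.val + k.val) :=
          Finset.sum_congr rfl fun k _ => hterm k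
      _ = (-(1 / u 0)) * ∑ k : Fin n, aOf H (j.val + k.val) * u ⟨n - k.val, by omega⟩ := by
          rw [Finset.mul_sum]
          refine Finset.sum_congr rfl fun k _ => ?_
          ring
      _ = (-(1 / u 0)) * (-(u 0 * aOf H (j.val + n))) := by rw [hk]
      _ = aOf H (j.val + n) := by field_simp
      _ = aOf H (i.val + j.val + 1) := by congr 1; omega
  · have hterm : ∀ k : Fin n, Cb n u i k
        = if k = (⟨i.val + 1, by have := i.isLt; omega⟩ : Fin n) then 1 else 0 := by
      intro k
      rw [Cb, Matrix.of_apply, if_neg hi]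
      by_cases h : k.val = i.val + 1
      · rw [if_pos h, if_pos (by ext; simp [h])]
      · rw [if_neg h, if_neg]
        intro hc
        apply h
        rw [hc]
    simp only [hterm, ite_mul, one_mul, zero_mul]
    rw [Finset.sum_ite_eq' Finset.univ _ (fun k => H k j), if_pos (Finset.mem_univ _)]
    rw [aOf_apply H hH]
    congr 1
    simp
    omega

end HankelAux
namespace HankelAux
variable {n : ℕ}

lemma dH_ctH (H : Matrix (Fin n) (Fin n) ℝ) (hH : IsHankel H) (u : Fin (n + 1) → ℝ)
    (hun : u (Fin.last n) ≠ 0) (hker : (dH H).mulVec (revVec u) = 0)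
    (i : Fin (n - 1)) (j : Fin (n + 1)) (h : 1 ≤ i.val + j.val) :
    dH (Ct n u * H) i j = aOf H (i.val + j.val - 1) := by
  simp only [dH, Matrix.of_apply]
  by_cases hj : j.val < n
  · rw [dif_pos hj, ctH_apply H hH u hun hker _ _ (by simpa using h)]
  · have hjn : j.val = n := by have := j.isLt; omega
    rw [dif_neg hj, ctH_apply H hH u hun hker _ _ (by simp; omega)]
    congr 1
    have := i.isLt
    simp; omega

lemma dH_cbH (H : Matrix (Fin n) (Fin n) ℝ) (hH : IsHankel H) (u : Fin (n + 1) → ℝ)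
    (hu1 : u 0 ≠ 0) (hker : (dH H).mulVec (revVec u) = 0)
    (i : Fin (n - 1)) (j : Fin (n + 1)) (h : i.val + 3 ≤ n) :
    dH (Cb n u * H) i j = aOf H (i.val + j.val + 1) := by
  simp only [dH, Matrix.of_apply]
  by_cases hj : j.val < n
  · rw [dif_pos hj, cbH_apply H hH u hu1 hker _ _ (by simp; omega)]
  · have hjn : j.val = n := by have := j.isLt; omega
    rw [dif_neg hj, cbH_apply H hH u hu1 hker _ _ (by simp; omega)]
    congr 1
    simp; omega

end HankelAux

lemma mulKey (x a c : ℝ) (hc : c ≠ 0) : -(x / c) * a * c = -(a * x) := by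
  rw [neg_mul, neg_mul, neg_inj, mul_right_comm, div_mul_cancel₀ x hc, mul_comm]

open HankelAux

/-- Corollary (kernel shift, Hankel version): if `u^J ∈ ker ∂H` for a Hankel matrix `H`,
then `C_t(u)H` and `C_b(u)H` are Hankel and `u^J` lies in the kernels of
`∂(C_t(u)H)` and `∂(C_b(u)H)`. -/
theorem hankel_kernel_shift
    (n : ℕ) (hn : 2 ≤ n) (H : Matrix (Fin n) (Fin n) ℝ) (hH : IsHankel H)
    (u : Fin (n + 1) → ℝ) (hu1 : u 0 ≠ 0) (hun : u (Fin.last n) ≠ 0)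
    (hker : (dH H).mulVec (revVec u) = 0) :
    IsHankel (Ct n u * H) ∧ IsHankel (Cb n u * H) ∧
      (dH (Ct n u * H)).mulVec (revVec u) = 0 ∧
      (dH (Cb n u * H)).mulVec (revVec u) = 0 := by
  refine ⟨?_, ?_, ?_, ?_⟩
  · intro i j hi hj
    rw [ctH_apply H hH u hun hker _ _ (by simp only [Fin.val_mk]; omega),
      ctH_apply H hH u hun hker _ _ (by simp only [Fin.val_mk]; omega)]
    congr 1
    simp only [Fin.val_mk]
    omega
  · intro i j hi hj
    rw [cbH_apply H hH u hu1 hker _ _ (by simp; omega),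
      cbH_apply H hH u hu1 hker _ _ (by simp; omega)]
    congr 1
    simp; omega
  · funext i
    simp only [Matrix.mulVec, dotProduct, Pi.zero_apply]
    by_cases hi0 : i.val = 0
    · rw [Fin.sum_univ_succ]
      have hrev0 : Fin.rev (0 : Fin (n + 1)) = Fin.last n := by ext; simp
      have hr0 : revVec u (0 : Fin (n + 1)) = u (Fin.last n) := by
        simp only [revVec, hrev0]
      have hd0 : (0 : Fin (n + 1)).val < n := by
        simp only [Fin.val_zero]; omega
      have S0 : dH (Ct n u * H) i 0 * u (Fin.last n)
          = ∑ m : Fin n, -(aOf H m.val * u ⟨n - 1 - m.val, by omega⟩) := by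
        have he : dH (Ct n u * H) i 0
            = ∑ k : Fin n, (-(u ⟨n - 1 - k.val, by omega⟩ / u (Fin.last n))) * aOf H k.val := by
          simp only [dH, Matrix.of_apply, dif_pos hd0, Matrix.mul_apply]
          refine Finset.sum_congr rfl fun k _ => ?_
          rw [Ct, Matrix.of_apply, if_pos hi0, aOf_apply H hH, neg_div]
          congr 2
        rw [he, Finset.sum_mul]
        refine Finset.sum_congr rfl fun k _ => ?_
        exact mulKey _ _ _ hun
      have Srest : ∀ m : Fin n, dH (Ct n u * H) i (Fin.succ m) * revVec u (Fin.succ m)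
          = aOf H m.val * u ⟨n - 1 - m.val, by omega⟩ := by
        intro m
        have h1 : dH (Ct n u * H) i (Fin.succ m) = aOf H m.val := by
          rw [dH_ctH H hH u hun hker _ _ (by simp [Fin.val_succ]; omega)]
          congr 1
          simp [Fin.val_succ]; omega
        have h2 : revVec u (Fin.succ m) = u ⟨n - 1 - m.val, by omega⟩ := by
          simp only [revVec]
          congr 1
          ext; simp [Fin.val_rev]; omega
        rw [h1, h2]
      rw [hr0, S0, Finset.sum_congr rfl fun m _ => Srest m, ← Finset.sum_add_distrib]
      simp
    · have hk := kerSum H hH u hker (i.val - 1) (by have := i.isLt; omega)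
      rw [← hk]
      refine Finset.sum_congr rfl fun j _ => ?_
      have h1 : dH (Ct n u * H) i j = aOf H (i.val - 1 + j.val) := by
        rw [dH_ctH H hH u hun hker _ _ (by omega)]
        congr 1
        omega
      rw [h1]
      rfl
  · funext i
    simp only [Matrix.mulVec, dotProduct, Pi.zero_apply]
    by_cases hi0 : i.val = n - 2
    · rw [Fin.sum_univ_castSucc]
      have hrl : revVec u (Fin.last n) = u 0 := by
        simp only [revVec]
        congr 1
        ext; simp
      have hnl : ¬ ((Fin.last n).val < n) := by simp
      have hlast : dH (Cb n u * H) i (Fin.last n) * u 0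
          = ∑ m : Fin n, -(aOf H (n - 1 + m.val) * u ⟨n - m.val, by omega⟩) := by
        have hi1 : i.val + 1 = n - 1 := by omega
        have he : dH (Cb n u * H) i (Fin.last n)
            = ∑ k : Fin n, (-(u ⟨n - k.val, by omega⟩ / u 0)) * aOf H (n - 1 + k.val) := by
          simp only [dH, Matrix.of_apply, dif_neg hnl, Matrix.mul_apply]
          refine Finset.sum_congr rfl fun k _ => ?_
          rw [Cb, Matrix.of_apply, if_pos (by simpa using hi1), aOf_apply H hH, neg_div]
          congr 2
          simp only [Fin.val_mk]
          omega
        rw [he, Finset.sum_mul]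
        refine Finset.sum_congr rfl fun k _ => ?_
        exact mulKey _ _ _ hu1
      have Srest : ∀ m : Fin n,
          dH (Cb n u * H) i (Fin.castSucc m) * revVec u (Fin.castSucc m)
          = aOf H (n - 1 + m.val) * u ⟨n - m.val, by omega⟩ := by
        intro m
        have hmn : (Fin.castSucc m).val < n := by simp
        have h1 : dH (Cb n u * H) i (Fin.castSucc m) = aOf H (n - 1 + m.val) := by
          simp only [dH, Matrix.of_apply, dif_pos hmn]
          rw [cbH_apply H hH u hu1 hker _ _ (by simp; omega)]
          congr 1
          simp; omega
        have h2 : revVec u (Fin.castSucc m) = u ⟨n - m.val, by omega⟩ := by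
          simp only [revVec]
          congr 1
          ext; simp [Fin.val_rev]
        rw [h1, h2]
      rw [hrl, hlast, Finset.sum_congr rfl fun m _ => Srest m, ← Finset.sum_add_distrib]
      simp
    · have hk := kerSum H hH u hker (i.val + 1) (by have := i.isLt; omega)
      rw [← hk]
      refine Finset.sum_congr rfl fun j _ => ?_
      have h1 : dH (Cb n u * H) i j = aOf H (i.val + 1 + j.val) := by
        rw [dH_cbH H hH u hu1 hker _ _ (by have := i.isLt; omega)]
        congr 1
        omega
      rw [h1]
      rfl
end
end

section
/- Let n ≥ 2, let T be an invertible n×n real Toeplitz matrix, and let u = (u₁,…,u_{n+1}) ∈ ℝ^{n+1} with u₁ ≠ 0 and u_{n+1} ≠ 0, such that u lies in the kernel of ∂T. Then there exists a function a : ℤ → ℝ such that T_{p,q} = a(p−q) for all 1 ≤ p,q ≤ n, and for all integers i, j and all 1 ≤ p,q ≤ n, (C_t(u)^i · T · C_r(u)^j)_{p,q} = a(p − q − i − j). In particular, every matrix C_t(u)^i · T · C_r(u)^j (i, j ∈ ℤ) is Toeplitz, so the extension of T by companion matrices preserves the Toeplitz structure. -/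
open Matrix Polynomial

noncomputable section

lemma toeplitz_shift {n : ℕ} {T : Matrix (Fin n) (Fin n) ℝ} (hT : IsToeplitz T) :
    ∀ (k p q : ℕ) (hp : p + k < n) (hq : q + k < n),
      T ⟨p + k, hp⟩ ⟨q + k, hq⟩ = T ⟨p, by omega⟩ ⟨q, by omega⟩ := by
  intro k
  induction k with
  | zero => intro p q hp hq; rfl
  | succ k ih =>
    intro p q hp hq
    have h1 := hT ⟨p + k, by omega⟩ ⟨q + k, by omega⟩ (show p + k + 1 < n by omega)
      (show q + k + 1 < n by omega)
    exact h1.trans (ih p q (by omega) (by omega))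

lemma toeplitz_eq {n : ℕ} {T : Matrix (Fin n) (Fin n) ℝ} (hT : IsToeplitz T)
    (p q p' q' : Fin n) (h : p.val + q'.val = p'.val + q.val) : T p q = T p' q' := by
  have key : ∀ (a b a' b' : Fin n), a'.val ≤ a.val → a.val + b'.val = a'.val + b.val →
      T a b = T a' b' := by
    intro a b a' b' hle hab
    obtain ⟨d, hd⟩ : ∃ d, a.val = a'.val + d := ⟨a.val - a'.val, by omega⟩
    have hb : b.val = b'.val + d := by omega
    have h2 := toeplitz_shift hT d a'.val b'.val (by omega) (by omega)
    calc T a b = T ⟨a'.val + d, by omega⟩ ⟨b'.val + d, by omega⟩ := by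
          congr 1
          · exact Fin.ext hd
          · exact Fin.ext hb
      _ = T ⟨a'.val, by omega⟩ ⟨b'.val, by omega⟩ := h2
      _ = T a' b' := by congr 1
  rcases le_total p'.val p.val with hle | hle
  · exact key p q p' q' hle h
  · exact (key p' q' p q hle (by omega)).symm

noncomputable def aFun (n : ℕ) (u : Fin (n + 1) → ℝ) (T : Matrix (Fin n) (Fin n) ℝ)
    (m : ℤ) : ℝ :=
  if h : m.natAbs < n then
    if 0 ≤ m then T ⟨m.natAbs, h⟩ ⟨0, by omega⟩ else T ⟨0, by omega⟩ ⟨m.natAbs, h⟩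
  else if h2 : 0 ≤ m then
    -(1 / u 0) * ∑ j : Fin n, u j.succ * aFun n u T (m - ((j : ℕ) + 1))
  else
    -(1 / u (Fin.last n)) * ∑ j : Fin n, u j.castSucc * aFun n u T (m + n - (j : ℕ))
  termination_by m.natAbs
  decreasing_by
  · have := j.isLt; omega
  · have := j.isLt; omega

section ToeplitzExtAux

variable {n : ℕ} {T : Matrix (Fin n) (Fin n) ℝ} {u : Fin (n + 1) → ℝ}

lemma aFun_base (hT : IsToeplitz T) (p q : Fin n) :
    aFun n u T ((p : ℤ) - (q : ℤ)) = T p q := by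
  have hp := p.isLt; have hq := q.isLt
  rw [aFun]
  rw [dif_pos (show ((p : ℤ) - q).natAbs < n by omega)]
  split_ifs with h
  · exact toeplitz_eq hT _ _ p q (by simp only [Fin.val_mk]; omega)
  · exact toeplitz_eq hT _ _ p q (by simp only [Fin.val_mk]; omega)

lemma aFun_eq (hT : IsToeplitz T) (p q : Fin n) (m : ℤ)
    (hpq : (p : ℤ) - (q : ℤ) = m) : aFun n u T m = T p q := by
  rw [← hpq, aFun_base hT]

/-- The fundamental recurrence: `∑ j u_j a(k-j) = 0` for every `k : ℤ`. -/
lemma aFun_rel (hn : 2 ≤ n) (hT : IsToeplitz T)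
    (hu1 : u 0 ≠ 0) (hun : u (Fin.last n) ≠ 0)
    (hker : (dT T).mulVec u = 0) (k : ℤ) :
    ∑ j : Fin (n + 1), u j * aFun n u T (k - (j : ℕ)) = 0 := by
  rcases lt_or_ge k 1 with hk | hk
  · -- k ≤ 0 : use the downward recurrence at m = k - n
    have hkn : (k - n).natAbs ≥ n := by omega
    have hkneg : ¬ (0 : ℤ) ≤ k - n := by omega
    have hrec : aFun n u T (k - n) =
        -(1 / u (Fin.last n)) * ∑ j : Fin n, u j.castSucc * aFun n u T (k - n + n - (j : ℕ)) := by
      rw [aFun, dif_neg (by omega), dif_neg hkneg]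
    have hsimp : ∀ j : Fin n, (k - n + n - (j : ℕ) : ℤ) = k - (j : ℕ) := by intro j; ring
    rw [Fin.sum_univ_castSucc]
    simp only [Fin.val_last, Fin.coe_castSucc]
    have : ∑ j : Fin n, u j.castSucc * aFun n u T (k - (j : ℕ))
        = ∑ j : Fin n, u j.castSucc * aFun n u T (k - n + n - (j : ℕ)) := by
      apply Finset.sum_congr rfl; intro j _; rw [hsimp]
    rw [this]
    rw [hrec]
    field_simp
    ring
  rcases lt_or_ge k n with hk2 | hk2
  · -- 1 ≤ k < n : kernel condition
    have hi : k.toNat - 1 < n - 1 := by omega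
    have h0 := congrFun hker ⟨k.toNat - 1, hi⟩
    simp only [Matrix.mulVec, dotProduct, Pi.zero_apply] at h0
    rw [← h0]
    apply Finset.sum_congr rfl
    intro j _
    rw [mul_comm]
    congr 1
    rcases Nat.eq_zero_or_pos j.val with hj | hj
    · rw [aFun_eq hT ⟨k.toNat - 1 + 1, by omega⟩ ⟨0, by omega⟩ _
        (by simp only [Fin.val_mk]; omega)]
      rw [dT]
      simp only [Matrix.of_apply, hj, if_pos]
    · rw [aFun_eq hT ⟨k.toNat - 1, by omega⟩ ⟨j.val - 1, by omega⟩ _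
        (by simp only [Fin.val_mk]; omega)]
      rw [dT]
      simp only [Matrix.of_apply]
      exact (if_neg (show ¬((j : ℕ) = 0) by omega)).symm
  · -- n ≤ k : upward recurrence
    have hrec : aFun n u T k =
        -(1 / u 0) * ∑ j : Fin n, u j.succ * aFun n u T (k - ((j : ℕ) + 1)) := by
      rw [aFun, dif_neg (by omega), dif_pos (by omega)]
    rw [Fin.sum_univ_succ]
    simp only [Fin.val_succ, Fin.val_zero, Nat.cast_zero, sub_zero, Nat.cast_add, Nat.cast_one]
    rw [hrec]
    field_simp
    ring

lemma sum_low (hn : 2 ≤ n) (hT : IsToeplitz T)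
    (hu1 : u 0 ≠ 0) (hun : u (Fin.last n) ≠ 0)
    (hker : (dT T).mulVec u = 0) (k : ℤ) :
    ∑ s : Fin n, u s.castSucc * aFun n u T (k - (s : ℕ)) =
      -(u (Fin.last n) * aFun n u T (k - n)) := by
  have h := aFun_rel hn hT hu1 hun hker k
  rw [Fin.sum_univ_castSucc] at h
  simp only [Fin.coe_castSucc, Fin.val_last] at h
  linarith

end ToeplitzExtAux

noncomputable def Mmat (n : ℕ) (u : Fin (n + 1) → ℝ) (T : Matrix (Fin n) (Fin n) ℝ)
    (c : ℤ) : Matrix (Fin n) (Fin n) ℝ :=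
  Matrix.of fun p q => aFun n u T ((p : ℤ) - (q : ℤ) - c)

lemma Ct_mul_Mmat (hn : 2 ≤ n) (hT : IsToeplitz T)
    (hu1 : u 0 ≠ 0) (hun : u (Fin.last n) ≠ 0)
    (hker : (dT T).mulVec u = 0) (c : ℤ) :
    Ct n u * Mmat n u T c = Mmat n u T (c + 1) := by
  ext p q
  rw [Matrix.mul_apply]
  show _ = aFun n u T ((p : ℤ) - (q : ℤ) - (c + 1))
  by_cases hp : p.val = 0
  · set k : ℤ := (n : ℤ) - 1 - (q : ℤ) - c with hk
    have step1 : ∑ r : Fin n, Ct n u p r * Mmat n u T c r q =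
        ∑ s : Fin n, (-(u s.castSucc) / u (Fin.last n)) * aFun n u T (k - (s : ℕ)) := by
      refine (Fintype.sum_equiv Fin.revPerm _ _ fun s => ?_).symm
      show (-(u s.castSucc) / u (Fin.last n)) * aFun n u T (k - (s : ℕ)) =
        Ct n u p s.rev * Mmat n u T c s.rev q
      rw [Ct, Mmat]
      simp only [Matrix.of_apply, if_pos hp, Fin.val_rev]
      have e1 : (⟨n - 1 - (n - (s.val + 1)), by omega⟩ : Fin (n + 1)) = s.castSucc :=
        Fin.ext (by simp only [Fin.val_mk, Fin.coe_castSucc]; omega)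
      rw [e1]
      have e2 : ((n - (s.val + 1) : ℕ) : ℤ) - (q : ℤ) - c = k - (s : ℕ) := by
        have := s.isLt; omega
      rw [e2]
    rw [step1]
    have step2 : ∑ s : Fin n, (-(u s.castSucc) / u (Fin.last n)) * aFun n u T (k - (s : ℕ)) =
        -(1 / u (Fin.last n)) * ∑ s : Fin n, u s.castSucc * aFun n u T (k - (s : ℕ)) := by
      rw [Finset.mul_sum]
      exact Finset.sum_congr rfl fun s _ => by ring
    rw [step2, sum_low hn hT hu1 hun hker k]
    have e3 : aFun n u T (k - n) = aFun n u T ((p : ℤ) - (q : ℤ) - (c + 1)) := by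
      congr 1; omega
    rw [← e3]
    field_simp
  · rw [Finset.sum_eq_single_of_mem (⟨p.val - 1, by omega⟩ : Fin n) (Finset.mem_univ _) ?_]
    · rw [Ct, Mmat]
      simp only [Matrix.of_apply, if_neg hp, Fin.val_mk]
      rw [if_pos (by omega : p.val - 1 + 1 = p.val), one_mul]
      congr 1
      show ((p.val - 1 : ℕ) : ℤ) - ((q : ℕ) : ℤ) - c = ((p : ℕ) : ℤ) - ((q : ℕ) : ℤ) - (c + 1)
      omega
    · intro r _ hr
      rw [Ct]
      simp only [Matrix.of_apply, if_neg hp]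
      rw [if_neg (fun hc => hr (Fin.ext (show r.val = p.val - 1 by omega))), zero_mul]

lemma Mmat_mul_Cr (hn : 2 ≤ n) (hT : IsToeplitz T)
    (hu1 : u 0 ≠ 0) (hun : u (Fin.last n) ≠ 0)
    (hker : (dT T).mulVec u = 0) (c : ℤ) :
    Mmat n u T c * Cr n u = Mmat n u T (c + 1) := by
  ext p q
  rw [Matrix.mul_apply]
  show _ = aFun n u T ((p : ℤ) - (q : ℤ) - (c + 1))
  by_cases hq : q.val = n - 1
  · set k : ℤ := (p : ℤ) - c with hk
    have step1 : ∑ r : Fin n, Mmat n u T c p r * Cr n u r q =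
        ∑ s : Fin n, u s.castSucc * aFun n u T (k - (s : ℕ)) * (-(1 / u (Fin.last n))) := by
      refine Finset.sum_congr rfl fun s _ => ?_
      rw [Cr, Mmat]
      simp only [Matrix.of_apply, if_pos hq]
      have e1 : (⟨s.val, by have := s.isLt; omega⟩ : Fin (n + 1)) = s.castSucc :=
        Fin.ext (by simp [Fin.coe_castSucc])
      rw [e1]
      have e2 : (p : ℤ) - (s : ℤ) - c = k - (s : ℕ) := by omega
      rw [e2]
      ring
    rw [step1, ← Finset.sum_mul, sum_low hn hT hu1 hun hker k]
    have e3 : aFun n u T (k - n) = aFun n u T ((p : ℤ) - (q : ℤ) - (c + 1)) := by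
      congr 1; omega
    rw [← e3]
    field_simp
  · have hq' : q.val + 1 < n := by have := q.isLt; omega
    rw [Finset.sum_eq_single_of_mem (⟨q.val + 1, hq'⟩ : Fin n) (Finset.mem_univ _) ?_]
    · rw [Cr, Mmat]
      simp only [Matrix.of_apply, Fin.val_mk]
      rw [if_neg hq, if_pos trivial, mul_one]
      congr 1
      push_cast
      ring
    · intro r _ hr
      rw [Cr]
      simp only [Matrix.of_apply]
      rw [if_neg hq, if_neg (fun hc => hr (Fin.ext hc)), mul_zero]

section ToeplitzExtAux2

variable {n : ℕ} {T : Matrix (Fin n) (Fin n) ℝ} {u : Fin (n + 1) → ℝ}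

lemma Ct_mul_Cb (hn : 2 ≤ n) (hu1 : u 0 ≠ 0) (hun : u (Fin.last n) ≠ 0) :
    Ct n u * Cb n u = 1 := by
  ext p q
  rw [Matrix.mul_apply, Matrix.one_apply]
  by_cases hp : p.val = 0
  · by_cases hq : q.val = 0
    · rw [Finset.sum_eq_single_of_mem (⟨n - 1, by omega⟩ : Fin n) (Finset.mem_univ _) ?_]
      · rw [Ct, Cb]
        simp only [Matrix.of_apply, if_pos hp]
        rw [if_pos trivial]
        have h1 : (⟨n - 1 - (n - 1), by omega⟩ : Fin (n + 1)) = 0 :=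
          Fin.ext (show n - 1 - (n - 1) = 0 by omega)
        have h2 : (⟨n - q.val, by omega⟩ : Fin (n + 1)) = Fin.last n :=
          Fin.ext (show n - q.val = n by omega)
        rw [h1, h2, if_pos (Fin.ext (show p.val = q.val by omega) : p = q)]
        field_simp
      · intro r _ hr
        rw [Ct, Cb]
        simp only [Matrix.of_apply, if_pos hp]
        rw [if_neg (fun hc : r.val = n - 1 => hr (Fin.ext hc)),
          if_neg (show ¬ q.val = r.val + 1 by omega), mul_zero]
    · -- q ≥ 1 : two cancelling terms
      have hq1 : q.val - 1 < n := by have := q.isLt; omega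
      have key : ∀ r : Fin n, Ct n u p r * Cb n u r q =
          (if r = (⟨q.val - 1, hq1⟩ : Fin n) then
            -u ⟨n - q.val, by omega⟩ / u (Fin.last n) else 0) +
          (if r = (⟨n - 1, by omega⟩ : Fin n) then
            u ⟨n - q.val, by omega⟩ / u (Fin.last n) else 0) := by
        intro r
        rw [Ct, Cb]
        simp only [Matrix.of_apply, if_pos hp]
        by_cases h1 : r = (⟨q.val - 1, hq1⟩ : Fin n)
        · have hr1 : r.val = q.val - 1 := by rw [h1]
          have hrn : ¬ r.val = n - 1 := by have := q.isLt; omega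
          have h2 : ¬ r = (⟨n - 1, by omega⟩ : Fin n) :=
            fun hc => hrn (by rw [hc])
          rw [if_pos h1, if_neg h2, if_neg hrn,
            if_pos (show q.val = r.val + 1 by omega), mul_one, add_zero]
          have e1 : (⟨n - 1 - r.val, by omega⟩ : Fin (n + 1)) =
              (⟨n - q.val, by omega⟩ : Fin (n + 1)) :=
            Fin.ext (show n - 1 - r.val = n - q.val by omega)
          rw [e1]
        · rw [if_neg h1]
          by_cases h2 : r = (⟨n - 1, by omega⟩ : Fin n)
          · have hrn : r.val = n - 1 := by rw [h2]
            rw [if_pos h2, if_pos hrn, zero_add]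
            have e1 : (⟨n - 1 - r.val, by omega⟩ : Fin (n + 1)) = 0 :=
              Fin.ext (show n - 1 - r.val = 0 by omega)
            rw [e1]
            field_simp
          · have hrn : ¬ r.val = n - 1 := fun hc => h2 (Fin.ext hc)
            have hrq : ¬ q.val = r.val + 1 := by
              intro hc
              exact h1 (Fin.ext (show r.val = q.val - 1 by omega))
            rw [if_neg hrn, if_neg hrq, mul_zero, if_neg h2, add_zero]
      rw [Finset.sum_congr rfl (fun r _ => key r), Finset.sum_add_distrib,
        Finset.sum_ite_eq', Finset.sum_ite_eq']
      simp only [Finset.mem_univ, if_true]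
      rw [if_neg (fun hc : p = q => hq (by rw [← hc]; exact hp))]
      ring
  · rw [Finset.sum_eq_single_of_mem (⟨p.val - 1, by omega⟩ : Fin n) (Finset.mem_univ _) ?_]
    · rw [Ct, Cb]
      simp only [Matrix.of_apply, if_neg hp]
      rw [if_pos (show p.val - 1 + 1 = p.val by omega), one_mul,
        if_neg (show ¬ p.val - 1 = n - 1 by have := p.isLt; omega)]
      by_cases h : p = q
      · rw [if_pos h, if_pos (show q.val = p.val - 1 + 1 by have := congrArg Fin.val h; omega)]
      · rw [if_neg h, if_neg (fun hc : q.val = p.val - 1 + 1 =>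
          h (Fin.ext (show p.val = q.val by omega)))]
    · intro r _ hr
      rw [Ct]
      simp only [Matrix.of_apply, if_neg hp]
      rw [if_neg (fun hc : r.val + 1 = p.val =>
        hr (Fin.ext (show r.val = p.val - 1 by omega))), zero_mul]

lemma Cr_mul_Cl (hn : 2 ≤ n) (hu1 : u 0 ≠ 0) (hun : u (Fin.last n) ≠ 0) :
    Cr n u * Cl n u = 1 := by
  ext p q
  rw [Matrix.mul_apply, Matrix.one_apply]
  by_cases hq : q.val = 0
  · by_cases hp : p.val = 0
    · rw [Finset.sum_eq_single_of_mem (⟨n - 1, by omega⟩ : Fin n) (Finset.mem_univ _) ?_]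
      · rw [Cr, Cl]
        simp only [Matrix.of_apply]
        rw [if_pos trivial, if_pos hq]
        have h1 : (⟨n - 1 + 1, by omega⟩ : Fin (n + 1)) =
            Fin.last n := Fin.ext (show n - 1 + 1 = n by omega)
        have h2 : (⟨p.val, by have := p.isLt; omega⟩ : Fin (n + 1)) = 0 :=
          Fin.ext (show p.val = 0 from hp)
        rw [h1, h2, if_pos (Fin.ext (show p.val = q.val by omega) : p = q)]
        field_simp
      · intro r _ hr
        rw [Cr, Cl]
        simp only [Matrix.of_apply, if_pos hq]
        rw [if_neg (fun hc : r.val = n - 1 => hr (Fin.ext hc)),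
          if_neg (show ¬ p.val = r.val + 1 by omega), zero_mul]
    · -- p ≥ 1 : two cancelling terms
      have hp1 : p.val - 1 < n := by have := p.isLt; omega
      have key : ∀ r : Fin n, Cr n u p r * Cl n u r q =
          (if r = (⟨p.val - 1, hp1⟩ : Fin n) then
            -u ⟨p.val, by have := p.isLt; omega⟩ / u 0 else 0) +
          (if r = (⟨n - 1, by omega⟩ : Fin n) then
            u ⟨p.val, by have := p.isLt; omega⟩ / u 0 *
              (u (Fin.last n) / u (Fin.last n)) else 0) := by
        intro r
        rw [Cr, Cl]
        simp only [Matrix.of_apply, if_pos hq]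
        by_cases h1 : r = (⟨p.val - 1, hp1⟩ : Fin n)
        · have hr1 : r.val = p.val - 1 := by rw [h1]
          have hrn : ¬ r.val = n - 1 := by have := p.isLt; omega
          have h2 : ¬ r = (⟨n - 1, by omega⟩ : Fin n) := fun hc => hrn (by rw [hc])
          rw [if_pos h1, if_neg h2, if_neg hrn,
            if_pos (show p.val = r.val + 1 by omega), one_mul, add_zero]
          have e1 : (⟨r.val + 1, by have := r.isLt; omega⟩ : Fin (n + 1)) =
              (⟨p.val, by have := p.isLt; omega⟩ : Fin (n + 1)) :=
            Fin.ext (show r.val + 1 = p.val by omega)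
          rw [e1]
        · rw [if_neg h1]
          by_cases h2 : r = (⟨n - 1, by omega⟩ : Fin n)
          · have hrn : r.val = n - 1 := by rw [h2]
            rw [if_pos h2, if_pos hrn, zero_add]
            have e1 : (⟨r.val + 1, by have := r.isLt; omega⟩ : Fin (n + 1)) = Fin.last n :=
              Fin.ext (show r.val + 1 = n by have := r.isLt; omega)
            rw [e1]
            field_simp
          · have hrn : ¬ r.val = n - 1 := fun hc => h2 (Fin.ext hc)
            have hrp : ¬ p.val = r.val + 1 := by
              intro hc
              exact h1 (Fin.ext (show r.val = p.val - 1 by omega))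
            rw [if_neg hrn, if_neg hrp, zero_mul, if_neg h2, add_zero]
      rw [Finset.sum_congr rfl (fun r _ => key r), Finset.sum_add_distrib,
        Finset.sum_ite_eq', Finset.sum_ite_eq']
      simp only [Finset.mem_univ, if_true]
      rw [if_neg (fun hc : p = q => hp (by rw [hc]; exact hq))]
      field_simp
      ring
  · have hq' : q.val - 1 < n := by have := q.isLt; omega
    rw [Finset.sum_eq_single_of_mem (⟨q.val - 1, hq'⟩ : Fin n) (Finset.mem_univ _) ?_]
    · rw [Cr, Cl]
      simp only [Matrix.of_apply]
      rw [if_neg (show ¬ ((⟨q.val - 1, hq'⟩ : Fin n) : ℕ) = n - 1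
          by have := q.isLt; show ¬ q.val - 1 = n - 1; omega),
        if_neg hq, if_pos (show q.val - 1 + 1 = q.val by omega), mul_one]
      by_cases h : p = q
      · rw [if_pos h, if_pos (show p.val = q.val - 1 + 1 by have := congrArg Fin.val h; omega)]
      · rw [if_neg h, if_neg (fun hc : p.val = q.val - 1 + 1 =>
          h (Fin.ext (show p.val = q.val by omega)))]
    · intro r _ hr
      rw [Cl]
      simp only [Matrix.of_apply]
      rw [if_neg hq, if_neg (fun hc : r.val + 1 = q.val =>
        hr (Fin.ext (show r.val = q.val - 1 by omega))), mul_zero]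
end ToeplitzExtAux2

/-- Theorem (Toeplitz extension): if `u ∈ ker ∂T` for an invertible Toeplitz `T` with
entries `T_{p,q} = a(p−q)`, then `(C_t(u)^i T C_r(u)^j)_{p,q} = a(p−q−i−j)` for all
integers `i, j`; in particular every `C_t(u)^i T C_r(u)^j` is Toeplitz. -/
theorem toeplitz_extension
    (n : ℕ) (hn : 2 ≤ n) (T : Matrix (Fin n) (Fin n) ℝ)
    (hTinv : IsUnit T.det) (hT : IsToeplitz T)
    (u : Fin (n + 1) → ℝ) (hu1 : u 0 ≠ 0) (hun : u (Fin.last n) ≠ 0)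
    (hker : (dT T).mulVec u = 0) :
    ∃ a : ℤ → ℝ,
      (∀ p q : Fin n, T p q = a (((p : ℕ) : ℤ) - ((q : ℕ) : ℤ))) ∧
      (∀ (i j : ℤ) (p q : Fin n),
        (Ct n u ^ i * T * Cr n u ^ j) p q = a (((p : ℕ) : ℤ) - ((q : ℕ) : ℤ) - i - j)) ∧
      (∀ i j : ℤ, IsToeplitz (Ct n u ^ i * T * Cr n u ^ j)) := by
  have hdetA : IsUnit (Ct n u).det := by
    have h := congrArg Matrix.det (Ct_mul_Cb (u := u) hn hu1 hun)
    rw [Matrix.det_mul, Matrix.det_one] at h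
    exact IsUnit.of_mul_eq_one _ h
  have hdetB : IsUnit (Cr n u).det := by
    have h := congrArg Matrix.det (Cr_mul_Cl (u := u) hn hu1 hun)
    rw [Matrix.det_mul, Matrix.det_one] at h
    exact IsUnit.of_mul_eq_one _ h
  have hT0 : T = Mmat n u T 0 := by
    ext p q
    rw [Mmat]
    simp only [Matrix.of_apply, sub_zero]
    exact (aFun_base hT p q).symm
  have hAinv : ∀ c : ℤ, (Ct n u)⁻¹ * Mmat n u T c = Mmat n u T (c - 1) := by
    intro c
    have h := Ct_mul_Mmat hn hT hu1 hun hker (c - 1)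
    rw [sub_add_cancel] at h
    rw [← h, ← Matrix.mul_assoc, Matrix.nonsing_inv_mul _ hdetA, Matrix.one_mul]
  have hBinv : ∀ c : ℤ, Mmat n u T c * (Cr n u)⁻¹ = Mmat n u T (c - 1) := by
    intro c
    have h := Mmat_mul_Cr hn hT hu1 hun hker (c - 1)
    rw [sub_add_cancel] at h
    rw [← h, Matrix.mul_assoc, Matrix.mul_nonsing_inv _ hdetB, Matrix.mul_one]
  have hA : ∀ (i c : ℤ), Ct n u ^ i * Mmat n u T c = Mmat n u T (c + i) := by
    intro i
    induction i using Int.induction_on with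
    | zero => intro c; rw [zpow_zero, Matrix.one_mul, add_zero]
    | succ i ih =>
      intro c
      rw [Matrix.zpow_add_one hdetA, Matrix.mul_assoc,
        Ct_mul_Mmat hn hT hu1 hun hker, ih]
      congr 1; ring
    | pred i ih =>
      intro c
      rw [show (-(i : ℤ) - 1) = (-(i : ℤ)) - 1 from rfl, Matrix.zpow_sub_one hdetA,
        Matrix.mul_assoc, hAinv, ih]
      congr 1; ring
  have hB : ∀ (j c : ℤ), Mmat n u T c * Cr n u ^ j = Mmat n u T (c + j) := by
    intro j
    induction j using Int.induction_on with
    | zero => intro c; rw [zpow_zero, Matrix.mul_one, add_zero]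
    | succ j ih =>
      intro c
      rw [Matrix.zpow_add_one hdetB, ← Matrix.mul_assoc, ih,
        Mmat_mul_Cr hn hT hu1 hun hker]
      congr 1; ring
    | pred j ih =>
      intro c
      rw [show (-(j : ℤ) - 1) = (-(j : ℤ)) - 1 from rfl, Matrix.zpow_sub_one hdetB,
        ← Matrix.mul_assoc, ih, hBinv]
      congr 1; ring
  have hmain : ∀ i j : ℤ, Ct n u ^ i * T * Cr n u ^ j = Mmat n u T (i + j) := by
    intro i j
    calc Ct n u ^ i * T * Cr n u ^ j
        = Ct n u ^ i * Mmat n u T 0 * Cr n u ^ j := by rw [← hT0]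
      _ = Mmat n u T (0 + i) * Cr n u ^ j := by rw [hA]
      _ = Mmat n u T (0 + i + j) := by rw [hB]
      _ = Mmat n u T (i + j) := by rw [zero_add]
  refine ⟨aFun n u T, ?_, ?_, ?_⟩
  · intro p q
    exact (aFun_base hT p q).symm
  · intro i j p q
    rw [hmain]
    show aFun n u T ((p : ℤ) - (q : ℤ) - (i + j)) = _
    congr 1; ring
  · intro i j
    rw [hmain]
    intro p q hp hq
    simp only [Mmat, Matrix.of_apply]
    congr 1
    push_cast
    ring
end
end

section
/- Let n ≥ 2, let H be an invertible n×n real Hankel matrix, and let u = (u₁,…,u_{n+1}) ∈ ℝ^{n+1} with u₁ ≠ 0 and u_{n+1} ≠ 0, such that the reversed vector u^J lies in the kernel of ∂H. Then there exists a function a : ℤ → ℝ such that H_{p,q} = a(p+q−n−1) for all 1 ≤ p,q ≤ n, and for all integers i, j and all 1 ≤ p,q ≤ n, (C_t(u)^i · H · C_r(u^J)^j)_{p,q} = a(p + q − n − 1 − i + j). In particular, every matrix C_t(u)^i · H · C_r(u^J)^j (i, j ∈ ℤ) is Hankel, so the extension of H by companion matrices preserves the Hankel structure. -/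
open Matrix Polynomial

noncomputable section

namespace HankelExt

lemma Hcongr {n : ℕ} (H : Matrix (Fin n) (Fin n) ℝ) {p p' q q' : Fin n}
    (hp : p.val = p'.val) (hq : q.val = q'.val) : H p q = H p' q' := by
  have h1 : p = p' := Fin.ext hp
  have h2 : q = q' := Fin.ext hq
  rw [h1, h2]

lemma sum_rev {n : ℕ} (g : Fin n → ℝ) : ∑ k : Fin n, g k.rev = ∑ k : Fin n, g k :=
  Fintype.sum_bijective Fin.rev Fin.rev_involutive.bijective _ _ (fun _ => rfl)

lemma hankel_shift {n : ℕ} (H : Matrix (Fin n) (Fin n) ℝ) (hH : IsHankel H) :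
    ∀ (d x y : ℕ) (h1 : x + d < n) (h2 : y + d < n),
      H ⟨x + d, h1⟩ ⟨y, by omega⟩ = H ⟨x, by omega⟩ ⟨y + d, h2⟩ := by
  intro d
  induction d with
  | zero => intro x y h1 h2; rfl
  | succ d ih =>
    intro x y h1 h2
    have step := hH ⟨x + d, by omega⟩ ⟨y, by omega⟩ (by simp only [Fin.val_mk]; omega) (by simp only [Fin.val_mk]; omega)
    have e2 := ih x (y + 1) (by omega) (by omega)
    calc H ⟨x + (d+1), h1⟩ ⟨y, by omega⟩ = H ⟨x + d, by omega⟩ ⟨y + 1, by omega⟩ := step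
    _ = H ⟨x, by omega⟩ ⟨y + 1 + d, by omega⟩ := e2
    _ = H ⟨x, by omega⟩ ⟨y + (d+1), h2⟩ := Hcongr H rfl (by simp only [Fin.val_mk]; omega)

lemma hankel_eq {n : ℕ} (H : Matrix (Fin n) (Fin n) ℝ) (hH : IsHankel H)
    (p q p' q' : Fin n) (h : p.val + q.val = p'.val + q'.val) : H p q = H p' q' := by
  rcases le_total p.val p'.val with hle | hle
  · obtain ⟨d, hd⟩ : ∃ d, p'.val = p.val + d := ⟨p'.val - p.val, by omega⟩
    have := hankel_shift H hH d p.val q'.val (by omega) (by omega)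
    calc H p q = H ⟨p.val, p.isLt⟩ ⟨q'.val + d, by omega⟩ := Hcongr H rfl (by simp only [Fin.val_mk]; omega)
    _ = H ⟨p.val + d, by omega⟩ ⟨q'.val, q'.isLt⟩ := this.symm
    _ = H p' q' := Hcongr H (by simp only [Fin.val_mk]; omega) rfl
  · obtain ⟨d, hd⟩ : ∃ d, p.val = p'.val + d := ⟨p.val - p'.val, by omega⟩
    have := hankel_shift H hH d p'.val q.val (by omega) (by omega)
    calc H p q = H ⟨p'.val + d, by omega⟩ ⟨q.val, q.isLt⟩ := Hcongr H (by simp only [Fin.val_mk]; omega) rfl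
    _ = H ⟨p'.val, p'.isLt⟩ ⟨q.val + d, by omega⟩ := this
    _ = H p' q' := Hcongr H rfl (by simp only [Fin.val_mk]; omega)

def baseH (n : ℕ) (H : Matrix (Fin n) (Fin n) ℝ) (s : ℕ) : ℝ :=
  if h : n = 0 then 0
  else H ⟨min s (n-1), by omega⟩ ⟨min (s - min s (n-1)) (n-1), by omega⟩

lemma baseH_spec {n : ℕ} (H : Matrix (Fin n) (Fin n) ℝ) (hH : IsHankel H)
    (p q : Fin n) : H p q = baseH n H (p.val + q.val) := by
  have hn : n ≠ 0 := fun h => (h ▸ p).elim0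
  rw [baseH, dif_neg hn]
  apply hankel_eq H hH
  have := p.isLt; have := q.isLt
  simp only [Fin.val_mk]
  omega



def seqA (n : ℕ) (u : Fin (n+1) → ℝ) (H : Matrix (Fin n) (Fin n) ℝ) (m : ℕ) : ℝ :=
  if h : m ≤ 2*n - 2 ∨ n = 0 then baseH n H m
  else -(1/u 0) * ∑ k : Fin n, u ⟨k.val + 1, by omega⟩ * seqA n u H (m - (k.val + 1))
termination_by m
decreasing_by omega

def seqD (n : ℕ) (u : Fin (n+1) → ℝ) (H : Matrix (Fin n) (Fin n) ℝ) (m : ℕ) : ℝ :=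
  if h : m ≤ 2*n - 2 ∨ n = 0 then baseH n H (2*n - 2 - m)
  else -(1/u (Fin.last n)) * ∑ k : Fin n, u ⟨k.val, by omega⟩ * seqD n u H (m - (n - k.val))
termination_by m
decreasing_by have := k.isLt; omega

def aFun (n : ℕ) (u : Fin (n+1) → ℝ) (H : Matrix (Fin n) (Fin n) ℝ) (t : ℤ) : ℝ :=
  if 1 - (n:ℤ) ≤ t then seqA n u H (t + n - 1).toNat else seqD n u H ((n:ℤ) - 1 - t).toNat

lemma aFun_base {n : ℕ} (u : Fin (n+1) → ℝ) (H : Matrix (Fin n) (Fin n) ℝ)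
    (t : ℤ) (h1 : 1 - (n:ℤ) ≤ t) (h2 : t ≤ (n:ℤ) - 1) :
    aFun n u H t = baseH n H (t + n - 1).toNat := by
  rw [aFun, if_pos h1, seqA]
  rw [dif_pos (by omega)]

lemma aFun_eq_D {n : ℕ} (u : Fin (n+1) → ℝ) (H : Matrix (Fin n) (Fin n) ℝ)
    (t : ℤ) (h2 : t ≤ (n:ℤ) - 1) :
    aFun n u H t = seqD n u H ((n:ℤ) - 1 - t).toNat := by
  by_cases h1 : 1 - (n:ℤ) ≤ t
  · rw [aFun_base u H t h1 h2, seqD, dif_pos (by omega)]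
    congr 1
    omega
  · rw [aFun, if_neg h1]

lemma aRec {n : ℕ} (hn : 2 ≤ n) (u : Fin (n+1) → ℝ) (H : Matrix (Fin n) (Fin n) ℝ)
    (hH : IsHankel H) (hu1 : u 0 ≠ 0) (hun : u (Fin.last n) ≠ 0)
    (hker : (dH H).mulVec (revVec u) = 0) (m : ℤ) :
    ∑ k : Fin (n+1), u k * aFun n u H (m - k.val) = 0 := by
  by_cases hm1 : (n:ℤ) ≤ m
  · -- upward recurrence
    set M := (m + n - 1).toNat with hM
    have key : seqA n u H M =
        -(1/u 0) * ∑ k : Fin n, u ⟨k.val + 1, by omega⟩ * seqA n u H (M - (k.val + 1)) := by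
      rw [seqA, dif_neg (by omega)]
    have hA : ∀ k : Fin (n+1), aFun n u H (m - k.val) = seqA n u H (M - k.val) := by
      intro k
      have hk := k.isLt
      rw [aFun, if_pos (by omega)]
      congr 1
      omega
    rw [Fin.sum_univ_succ]
    simp only [hA]
    simp only [Fin.val_succ, Fin.val_zero, Nat.sub_zero]
    have hs : ∀ k : Fin n, u k.succ * seqA n u H (M - (k.val + 1)) =
        u ⟨k.val + 1, by omega⟩ * seqA n u H (M - (k.val + 1)) := by
      intro k; rfl
    rw [Finset.sum_congr rfl (fun k _ => hs k), key]
    field_simp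
    ring
  by_cases hm0 : m ≤ 0
  · -- downward recurrence
    set M := ((n:ℤ) + n - 1 - m).toNat with hM
    have key : seqD n u H M =
        -(1/u (Fin.last n)) * ∑ k : Fin n, u ⟨k.val, by omega⟩ * seqD n u H (M - (n - k.val)) := by
      rw [seqD, dif_neg (by omega)]
    have hD : ∀ k : Fin (n+1), aFun n u H (m - k.val) = seqD n u H (M - (n - k.val)) := by
      intro k
      have hk := k.isLt
      rw [aFun_eq_D u H _ (by omega)]
      congr 1
      omega
    rw [Fin.sum_univ_castSucc]
    simp only [hD]
    simp only [Fin.val_last, Fin.coe_castSucc, Nat.sub_self, Nat.sub_zero]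
    have hs : ∀ k : Fin n, u k.castSucc * seqD n u H (M - (n - k.val)) =
        u ⟨k.val, by omega⟩ * seqD n u H (M - (n - k.val)) := by
      intro k; rfl
    rw [Finset.sum_congr rfl (fun k _ => hs k), key]
    field_simp
    ring
  · -- middle: use kernel condition
    push_neg at hm1 hm0
    set i0 : Fin (n-1) := ⟨(m-1).toNat, by omega⟩ with hi0
    have hk0 := congrFun hker i0
    rw [Matrix.mulVec, Pi.zero_apply] at hk0
    simp only [dotProduct] at hk0
    set G : Fin (n+1) → ℝ := fun j =>
      baseH n H ((m-1).toNat + j.val) * u j.rev with hG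
    have hkG : ∑ j : Fin (n+1), G j = 0 := by
      rw [← hk0]
      apply Finset.sum_congr rfl
      intro j _
      have hdH : dH H i0 j = baseH n H ((m-1).toNat + j.val) := by
        rw [dH]
        simp only [Matrix.of_apply]
        by_cases hjn : j.val < n
        · rw [dif_pos hjn, baseH_spec H hH]
        · rw [dif_neg hjn, baseH_spec H hH]
          congr 1
          simp only [Fin.val_mk, hi0]
          have := j.isLt
          omega
      rw [hG, hdH]
      rfl
    calc ∑ k : Fin (n+1), u k * aFun n u H (m - k.val)
        = ∑ j : Fin (n+1), G j.rev := by
          apply Finset.sum_congr rfl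
          intro j _
          have hrr : G j.rev = baseH n H ((m-1).toNat + (Fin.rev j).val) * u j := by
            rw [hG]
            simp only [Fin.rev_rev]
          rw [hrr, aFun_base u H (m - j.val) (by have := j.isLt; omega) (by omega)]
          have harg : (m - (j.val:ℤ) + (n:ℤ) - 1).toNat = (m-1).toNat + (Fin.rev j).val := by
            have hrev : (Fin.rev j).val = n - j.val := by rw [Fin.val_rev]; omega
            have hj := j.isLt
            omega
          rw [harg, mul_comm]
      _ = ∑ j : Fin (n+1), G j := sum_rev G
      _ = 0 := hkG

lemma aFun_entry {n : ℕ} (u : Fin (n+1) → ℝ) (H : Matrix (Fin n) (Fin n) ℝ)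
    (hH : IsHankel H) (p q : Fin n) :
    H p q = aFun n u H ((p.val:ℤ) + q.val + 1 - n) := by
  have hp := p.isLt; have hq := q.isLt
  rw [aFun_base u H _ (by omega) (by omega), baseH_spec H hH p q]
  congr 1
  omega

def Em (n : ℕ) (a : ℤ → ℝ) (c : ℤ) : Matrix (Fin n) (Fin n) ℝ :=
  Matrix.of fun p q => a ((p.val:ℤ) + q.val + 1 - n + c)

lemma Ct_mul_Em {n : ℕ} (hn : 2 ≤ n) (u : Fin (n+1) → ℝ) (hun : u (Fin.last n) ≠ 0)
    (a : ℤ → ℝ) (hrec : ∀ m : ℤ, ∑ k : Fin (n+1), u k * a (m - k.val) = 0) (c : ℤ) :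
    Ct n u * Em n a c = Em n a (c - 1) := by
  ext p q
  rw [Matrix.mul_apply]
  have hEm : Em n a (c-1) p q = a ((p.val:ℤ) + q.val + 1 - n + (c-1)) := rfl
  rw [hEm]
  by_cases hp : p.val = 0
  · have hstep := hrec ((q.val:ℤ) + c)
    rw [Fin.sum_univ_castSucc] at hstep
    simp only [Fin.coe_castSucc, Fin.val_last] at hstep
    have hsum := eq_neg_of_add_eq_zero_left hstep
    rw [← sum_rev (fun k => Ct n u p k * Em n a c k q)]
    have hterm : ∀ k : Fin n, Ct n u p k.rev * Em n a c k.rev q =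
        -(u k.castSucc * a ((q.val:ℤ) + c - k.val)) / u (Fin.last n) := by
      intro k
      have h1 : (Fin.rev k).val = n - 1 - k.val := by rw [Fin.val_rev]; omega
      simp only [Ct, Em, Matrix.of_apply, hp, reduceIte]
      rw [show (⟨n - 1 - (Fin.rev k).val, by omega⟩ : Fin (n+1)) = k.castSucc from
        Fin.ext (by simp only [Fin.val_mk, Fin.coe_castSucc]; omega)]
      rw [show (((Fin.rev k).val : ℤ)) + q.val + 1 - n + c = (q.val:ℤ) + c - k.val from by omega]
      ring
    rw [Finset.sum_congr rfl (fun k _ => hterm k)]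
    rw [← Finset.sum_div, Finset.sum_neg_distrib, hsum, neg_neg]
    rw [show ((p.val:ℤ)) + q.val + 1 - n + (c-1) = (q.val:ℤ) + c - n from by omega]
    field_simp
  · rw [show ((p.val:ℤ)) + q.val + 1 - n + (c-1) = ((p.val - 1 : ℕ):ℤ) + q.val + 1 - n + c from by omega]
    have hlt : p.val - 1 < n := by have := p.isLt; omega
    rw [Finset.sum_eq_single_of_mem (⟨p.val - 1, hlt⟩ : Fin n) (Finset.mem_univ _)]
    · simp only [Ct, Em, Matrix.of_apply, Fin.val_mk]
      rw [if_neg hp, if_pos (by omega)]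
      rw [one_mul]
    · intro b _ hb
      simp only [Ct, Matrix.of_apply]
      rw [if_neg hp, if_neg, zero_mul]
      intro hcon
      exact hb (Fin.ext (by simp only [Fin.val_mk]; omega))

lemma Em_mul_Cr {n : ℕ} (hn : 2 ≤ n) (u : Fin (n+1) → ℝ) (hu1 : u 0 ≠ 0)
    (a : ℤ → ℝ) (hrec : ∀ m : ℤ, ∑ k : Fin (n+1), u k * a (m - k.val) = 0) (c : ℤ) :
    Em n a c * Cr n (revVec u) = Em n a (c + 1) := by
  ext p q
  rw [Matrix.mul_apply]
  have hEm : Em n a (c+1) p q = a ((p.val:ℤ) + q.val + 1 - n + (c+1)) := rfl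
  rw [hEm]
  by_cases hq : q.val = n - 1
  · have hstep := hrec ((p.val:ℤ) + c + 1)
    rw [Fin.sum_univ_succ] at hstep
    simp only [Fin.val_succ, Fin.val_zero, Nat.cast_zero, Nat.cast_add, Nat.cast_one,
      sub_zero] at hstep
    have hnorm : ∀ k : Fin n, u k.succ * a ((p.val:ℤ) + c + 1 - (k.val + 1)) =
        u k.succ * a ((p.val:ℤ) + c - k.val) := fun k => by
      rw [show ((p.val:ℤ) + c + 1 - (k.val + 1)) = (p.val:ℤ) + c - k.val from by ring]
    rw [Finset.sum_congr rfl (fun k _ => hnorm k)] at hstep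
    have hsum := eq_neg_of_add_eq_zero_right hstep
    rw [← sum_rev (fun k => Em n a c p k * Cr n (revVec u) k q)]
    have hterm : ∀ k : Fin n, Em n a c p k.rev * Cr n (revVec u) k.rev q =
        -(u k.succ * a ((p.val:ℤ) + c - k.val)) / u 0 := by
      intro k
      have h1 : (Fin.rev k).val = n - 1 - k.val := by rw [Fin.val_rev]; omega
      simp only [Em, Cr, Matrix.of_apply, hq, reduceIte, revVec]
      rw [show Fin.rev (Fin.last n) = 0 from Fin.rev_last n]
      rw [show Fin.rev (⟨(Fin.rev k).val, by omega⟩ : Fin (n+1)) = k.succ from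
        Fin.ext (by simp only [Fin.val_rev, Fin.val_mk, Fin.val_succ]; omega)]
      rw [show ((p.val:ℤ)) + ((Fin.rev k).val : ℤ) + 1 - n + c = (p.val:ℤ) + c - k.val from by omega]
      ring
    rw [Finset.sum_congr rfl (fun k _ => hterm k)]
    rw [← Finset.sum_div, Finset.sum_neg_distrib, hsum, neg_neg]
    rw [show ((p.val:ℤ)) + q.val + 1 - n + (c+1) = (p.val:ℤ) + c + 1 from by
      have := q.isLt; omega]
    field_simp
  · have hlt : q.val + 1 < n := by have := q.isLt; omega
    rw [show ((p.val:ℤ)) + q.val + 1 - n + (c+1) = (p.val:ℤ) + ((q.val + 1 : ℕ):ℤ) + 1 - n + c from by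
      push_cast; ring]
    rw [Finset.sum_eq_single_of_mem (⟨q.val + 1, hlt⟩ : Fin n) (Finset.mem_univ _)]
    · simp only [Em, Cr, Matrix.of_apply, Fin.val_mk]
      rw [if_neg hq]
      simp
    · intro b _ hb
      simp only [Cr, Matrix.of_apply]
      rw [if_neg hq, if_neg, mul_zero]
      intro hcon
      exact hb (Fin.ext (by simp only [Fin.val_mk]; omega))

lemma uapp {N : ℕ} (u : Fin N → ℝ) {x : ℕ} {hx : x < N} {k : Fin N} (h : x = k.val) :
    u ⟨x, hx⟩ = u k := by
  congr 1
  exact Fin.ext h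

lemma Ct_mul_Cb {n : ℕ} (hn : 2 ≤ n) (u : Fin (n+1) → ℝ) (hu1 : u 0 ≠ 0)
    (hun : u (Fin.last n) ≠ 0) : Ct n u * Cb n u = 1 := by
  obtain ⟨m, rfl⟩ : ∃ m, n = m + 1 := ⟨n - 1, by omega⟩
  ext i j
  rw [Matrix.mul_apply, Matrix.one_apply]
  by_cases hi : i.val = 0
  · by_cases hj : j.val = 0
    · rw [if_pos (Fin.ext (hi.trans hj.symm))]
      rw [Fin.sum_univ_castSucc]
      have hzero : ∀ k : Fin m, Ct (m+1) u i k.castSucc * Cb (m+1) u k.castSucc j = 0 := by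
        intro k
        have hk := k.isLt
        simp only [Ct, Cb, Matrix.of_apply, hi, reduceIte, Fin.coe_castSucc]
        rw [if_neg (by omega), if_neg (by omega), mul_zero]
      rw [Finset.sum_congr rfl (fun k _ => hzero k), Finset.sum_const_zero, zero_add]
      simp only [Ct, Cb, Matrix.of_apply, hi, reduceIte, Fin.val_last]
      rw [if_pos (by omega : m = m + 1 - 1)]
      rw [uapp u (show m + 1 - 1 - m = ((0 : Fin (m+2))).val from by simp)]
      rw [uapp u (show m + 1 - j.val = (Fin.last (m+1)).val from by simp [hj])]
      field_simp
    · rw [if_neg (fun h => hj (by rw [← h, hi]))]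
      rw [Fin.sum_univ_castSucc]
      have hjm := j.isLt
      obtain ⟨k1, hk1⟩ : ∃ k1 : Fin (m+2), k1.val = m + 1 - j.val := ⟨⟨m+1-j.val, by omega⟩, rfl⟩
      have hmain : ∑ k : Fin m, Ct (m+1) u i k.castSucc * Cb (m+1) u k.castSucc j
          = -u k1 / u (Fin.last (m+1)) := by
        rw [Finset.sum_eq_single_of_mem (⟨j.val - 1, by omega⟩ : Fin m) (Finset.mem_univ _)]
        · simp only [Ct, Cb, Matrix.of_apply, hi, reduceIte, Fin.coe_castSucc, Fin.val_mk]
          rw [if_neg (by omega), if_pos (by omega), mul_one]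
          rw [uapp u (show m + 1 - 1 - (j.val - 1) = k1.val from by omega)]
        · intro b _ hb
          have hbm := b.isLt
          simp only [Ct, Cb, Matrix.of_apply, hi, reduceIte, Fin.coe_castSucc]
          rw [if_neg (by omega), if_neg, mul_zero]
          intro hcon
          exact hb (Fin.ext (by simp only [Fin.val_mk]; omega))
      rw [hmain]
      simp only [Ct, Cb, Matrix.of_apply, hi, reduceIte, Fin.val_last]
      rw [if_pos (by omega : m = m + 1 - 1)]
      rw [uapp u (show m + 1 - 1 - m = ((0 : Fin (m+2))).val from by simp)]
      rw [uapp u (show m + 1 - j.val = k1.val from by omega)]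
      field_simp
      ring
  · rw [Finset.sum_eq_single_of_mem (⟨i.val - 1, by have := i.isLt; omega⟩ : Fin (m+1))
      (Finset.mem_univ _)]
    · simp only [Ct, Cb, Matrix.of_apply, Fin.val_mk]
      rw [if_neg hi, if_pos (by omega), one_mul, if_neg (by have := i.isLt; omega)]
      by_cases hij : i = j
      · rw [if_pos (by rw [← hij]; omega), if_pos hij]
      · rw [if_neg, if_neg hij]
        intro hcon
        exact hij (Fin.ext (by omega))
    · intro b _ hb
      simp only [Ct, Matrix.of_apply]
      rw [if_neg hi, if_neg, zero_mul]
      intro hcon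
      exact hb (Fin.ext (by simp only [Fin.val_mk]; omega))

lemma Cr_mul_Cl {n : ℕ} (hn : 2 ≤ n) (v : Fin (n+1) → ℝ) (hv1 : v 0 ≠ 0)
    (hvn : v (Fin.last n) ≠ 0) : Cr n v * Cl n v = 1 := by
  obtain ⟨m, rfl⟩ : ∃ m, n = m + 1 := ⟨n - 1, by omega⟩
  ext i j
  rw [Matrix.mul_apply, Matrix.one_apply]
  by_cases hj : j.val = 0
  · by_cases hi : i.val = 0
    · rw [if_pos (Fin.ext (hi.trans hj.symm))]
      rw [Fin.sum_univ_castSucc]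
      have hzero : ∀ k : Fin m, Cr (m+1) v i k.castSucc * Cl (m+1) v k.castSucc j = 0 := by
        intro k
        have hk := k.isLt
        simp only [Cr, Cl, Matrix.of_apply, Fin.coe_castSucc]
        rw [if_neg (by omega), if_neg (by omega), zero_mul]
      rw [Finset.sum_congr rfl (fun k _ => hzero k), Finset.sum_const_zero, zero_add]
      simp only [Cr, Cl, Matrix.of_apply, Fin.val_last]
      rw [if_pos (by omega : m = m + 1 - 1), if_pos hj]
      rw [uapp v (show i.val = ((0 : Fin (m+2))).val from by simp [hi])]
      rw [uapp v (show m + 1 = (Fin.last (m+1)).val from by simp)]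
      field_simp
    · rw [if_neg (fun h => hi (by rw [h, hj]))]
      rw [Fin.sum_univ_castSucc]
      have him := i.isLt
      obtain ⟨k1, hk1⟩ : ∃ k1 : Fin (m+2), k1.val = i.val := ⟨⟨i.val, by omega⟩, rfl⟩
      have hmain : ∑ k : Fin m, Cr (m+1) v i k.castSucc * Cl (m+1) v k.castSucc j
          = -v k1 / v 0 := by
        rw [Finset.sum_eq_single_of_mem (⟨i.val - 1, by omega⟩ : Fin m) (Finset.mem_univ _)]
        · simp only [Cr, Cl, Matrix.of_apply, Fin.coe_castSucc, Fin.val_mk]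
          rw [if_neg (by omega), if_pos (by omega), if_pos hj, one_mul]
          rw [uapp v (show i.val - 1 + 1 = k1.val from by omega)]
        · intro b _ hb
          have hbm := b.isLt
          simp only [Cr, Cl, Matrix.of_apply, Fin.coe_castSucc]
          rw [if_neg (by omega), if_neg, zero_mul]
          intro hcon
          exact hb (Fin.ext (by simp only [Fin.val_mk]; omega))
      rw [hmain]
      simp only [Cr, Cl, Matrix.of_apply, Fin.val_last]
      rw [if_pos (by omega : m = m + 1 - 1), if_pos hj]
      rw [uapp v (show m + 1 = (Fin.last (m+1)).val from by simp)]
      rw [uapp v (show i.val = k1.val from hk1.symm)]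
      field_simp
      ring
  · rw [Finset.sum_eq_single_of_mem (⟨j.val - 1, by have := j.isLt; omega⟩ : Fin (m+1))
      (Finset.mem_univ _)]
    · have hjm := j.isLt
      simp only [Cr, Cl, Matrix.of_apply, Fin.val_mk]
      rw [if_neg (show ¬(j.val - 1 = m + 1 - 1) from by omega), if_neg hj,
        if_pos (show j.val - 1 + 1 = j.val from by omega), mul_one]
      by_cases hij : i = j
      · rw [if_pos (by rw [hij]; omega), if_pos hij]
      · rw [if_neg, if_neg hij]
        intro hcon
        exact hij (Fin.ext (by omega))
    · intro b _ hb
      simp only [Cl, Matrix.of_apply]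
      rw [if_neg hj, if_neg, mul_zero]
      intro hcon
      exact hb (Fin.ext (by simp only [Fin.val_mk]; omega))


lemma zpow_Ct_Em {n : ℕ} (u : Fin (n+1) → ℝ) (a : ℤ → ℝ)
    (hdet : IsUnit (Ct n u).det)
    (hCt : ∀ c : ℤ, Ct n u * Em n a c = Em n a (c - 1)) :
    ∀ (i c : ℤ), Ct n u ^ i * Em n a c = Em n a (c - i) := by
  intro i
  induction i using Int.induction_on with
  | zero => intro c; rw [zpow_zero, Matrix.one_mul]; norm_num
  | succ k ih =>
    intro c
    rw [show ((k:ℤ) + 1) = 1 + (k:ℤ) from by ring, Matrix.zpow_one_add hdet,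
      Matrix.mul_assoc, ih, hCt]
    congr 1
    ring
  | pred k ih =>
    intro c
    rw [show (-(k:ℤ) - 1) = -1 + -(k:ℤ) from by ring, Matrix.zpow_add hdet,
      Matrix.zpow_neg_one, Matrix.mul_assoc, ih]
    rw [show c - -(k:ℤ) = (c - -(k:ℤ) + 1) - 1 from by ring, ← hCt (c - -(k:ℤ) + 1),
      ← Matrix.mul_assoc, Matrix.nonsing_inv_mul _ hdet, Matrix.one_mul]
    congr 1
    ring

lemma zpow_Em_Cr {n : ℕ} (v : Fin (n+1) → ℝ) (a : ℤ → ℝ)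
    (hdet : IsUnit (Cr n v).det)
    (hCr : ∀ c : ℤ, Em n a c * Cr n v = Em n a (c + 1)) :
    ∀ (j c : ℤ), Em n a c * Cr n v ^ j = Em n a (c + j) := by
  intro j
  induction j using Int.induction_on with
  | zero => intro c; rw [zpow_zero, Matrix.mul_one]; norm_num
  | succ k ih =>
    intro c
    rw [Matrix.zpow_add hdet, zpow_one, ← Matrix.mul_assoc, ih, hCr]
    congr 1
    ring
  | pred k ih =>
    intro c
    rw [show (-(k:ℤ) - 1) = -(k:ℤ) + -1 from by ring, Matrix.zpow_add hdet,
      Matrix.zpow_neg_one, ← Matrix.mul_assoc, ih]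
    rw [show c + -(k:ℤ) = (c + -(k:ℤ) - 1) + 1 from by ring, ← hCr (c + -(k:ℤ) - 1),
      Matrix.mul_assoc, Matrix.mul_nonsing_inv _ hdet, Matrix.mul_one]
    congr 1
    ring
end HankelExt

/-- Corollary (Hankel extension): if `u^J ∈ ker ∂H` for an invertible Hankel `H` with
entries `H_{p,q} = a(p+q−n−1)`, then `(C_t(u)^i H C_r(u^J)^j)_{p,q} = a(p+q−n−1−i+j)`
for all integers `i, j`; in particular every `C_t(u)^i H C_r(u^J)^j` is Hankel. -/
theorem hankel_extension
    (n : ℕ) (hn : 2 ≤ n) (H : Matrix (Fin n) (Fin n) ℝ)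
    (hHinv : IsUnit H.det) (hH : IsHankel H)
    (u : Fin (n + 1) → ℝ) (hu1 : u 0 ≠ 0) (hun : u (Fin.last n) ≠ 0)
    (hker : (dH H).mulVec (revVec u) = 0) :
    ∃ a : ℤ → ℝ,
      (∀ p q : Fin n, H p q = a (((p : ℕ) : ℤ) + ((q : ℕ) : ℤ) + 1 - (n : ℤ))) ∧
      (∀ (i j : ℤ) (p q : Fin n),
        (Ct n u ^ i * H * Cr n (revVec u) ^ j) p q =
          a (((p : ℕ) : ℤ) + ((q : ℕ) : ℤ) + 1 - (n : ℤ) - i + j)) ∧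
      (∀ i j : ℤ, IsHankel (Ct n u ^ i * H * Cr n (revVec u) ^ j)) := by
  classical
  set a : ℤ → ℝ := HankelExt.aFun n u H with ha
  have hrec : ∀ m : ℤ, ∑ k : Fin (n+1), u k * a (m - k.val) = 0 :=
    HankelExt.aRec hn u H hH hu1 hun hker
  have hent : ∀ p q : Fin n, H p q = a ((p.val:ℤ) + q.val + 1 - n) :=
    fun p q => HankelExt.aFun_entry u H hH p q
  have hHE : H = HankelExt.Em n a 0 := by
    ext p q
    rw [hent p q]
    show _ = a ((p.val:ℤ) + q.val + 1 - n + 0)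
    rw [add_zero]
  have hCt : ∀ c : ℤ, Ct n u * HankelExt.Em n a c = HankelExt.Em n a (c - 1) :=
    HankelExt.Ct_mul_Em hn u hun a hrec
  have hv1 : revVec u 0 ≠ 0 := by
    show u (Fin.rev 0) ≠ 0
    rw [Fin.rev_zero]
    exact hun
  have hvn : revVec u (Fin.last n) ≠ 0 := by
    show u (Fin.rev (Fin.last n)) ≠ 0
    rw [Fin.rev_last]
    exact hu1
  have hCr : ∀ c : ℤ, HankelExt.Em n a c * Cr n (revVec u) = HankelExt.Em n a (c + 1) :=
    HankelExt.Em_mul_Cr hn u hu1 a hrec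
  have hdetCt : IsUnit (Ct n u).det := by
    have h1 := HankelExt.Ct_mul_Cb hn u hu1 hun
    exact IsUnit.of_mul_eq_one _ (by rw [← Matrix.det_mul, h1, Matrix.det_one])
  have hdetCr : IsUnit (Cr n (revVec u)).det := by
    have h1 := HankelExt.Cr_mul_Cl hn (revVec u) hv1 hvn
    exact IsUnit.of_mul_eq_one _ (by rw [← Matrix.det_mul, h1, Matrix.det_one])
  have key : ∀ i j : ℤ, Ct n u ^ i * H * Cr n (revVec u) ^ j = HankelExt.Em n a (j - i) := by
    intro i j
    rw [hHE, HankelExt.zpow_Ct_Em u a hdetCt hCt i 0,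
      HankelExt.zpow_Em_Cr (revVec u) a hdetCr hCr j (0 - i)]
    congr 1
    ring
  refine ⟨a, hent, ?_, ?_⟩
  · intro i j p q
    rw [key i j]
    show a ((p.val:ℤ) + q.val + 1 - n + (j - i)) = _
    congr 1
    ring
  · intro i j
    rw [key i j]
    intro p q hpi hqj
    show a (((⟨p.val + 1, hpi⟩ : Fin n).val:ℤ) + q.val + 1 - n + (j - i)) =
      a ((p.val:ℤ) + ((⟨q.val + 1, hqj⟩ : Fin n).val:ℤ) + 1 - n + (j - i))
    congr 1
    simp only [Fin.val_mk]
    push_cast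
    ring
end
end
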